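/- arXiv:1803.06087 — 9 statements merged into one kernel-verified Lean document; each statement's English description precedes it below -/
import Mathlib

section
/- For every (x,y) ∈ ℝ² with (x,y) ≠ (0,0), the inner product of the gradient of W at (x,y) with f₀(x,y) equals zero: ⟨∇W(x,y), f₀(x,y)⟩ = 0. -/
/-- `W(x,y) = (x⁴+y⁴)/(x²+y²)` for `(x,y) ≠ (0,0)`, and `W(0,0) = 0`. -/
noncomputable def W (p : ℝ × ℝ) : ℝ :=
  if p = 0 then 0 else (p.1 ^ 4 + p.2 ^ 4) / (p.1 ^ 2 + p.2 ^ 2)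

def a (x y : ℝ) : ℝ := 2 * x * (x ^ 4 + 2 * x ^ 2 * y ^ 2 - y ^ 4)

def b (x y : ℝ) : ℝ := 2 * y * (-x ^ 4 + 2 * x ^ 2 * y ^ 2 + y ^ 4)

def f0 (p : ℝ × ℝ) : ℝ × ℝ := (-b p.1 p.2, a p.1 p.2)

/-- For `(x,y) ≠ (0,0)`, the inner product of `∇W(x,y)` with `f₀(x,y)` (i.e. the
directional derivative of `W` along `f₀`) is zero. -/
theorem stmt4 :
    ∀ p : ℝ × ℝ, p ≠ 0 → fderiv ℝ W p (f0 p) = 0 := by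
  intro p hp
  have hden : p.1 * p.1 + p.2 * p.2 ≠ 0 := by
    have h1 : p.1 ≠ 0 ∨ p.2 ≠ 0 := by
      by_contra h
      push_neg at h
      exact hp (Prod.ext h.1 h.2)
    rcases h1 with h | h
    · have h2 := mul_self_pos.2 h
      nlinarith [mul_self_nonneg p.2]
    · have h2 := mul_self_pos.2 h
      nlinarith [mul_self_nonneg p.1]
  have heq : W =ᶠ[nhds p] fun q : ℝ × ℝ =>
      (q.1 * q.1 * (q.1 * q.1) + q.2 * q.2 * (q.2 * q.2)) * (q.1 * q.1 + q.2 * q.2)⁻¹ := by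
    filter_upwards [IsOpen.mem_nhds isOpen_compl_singleton hp] with q hq
    simp only [Set.mem_compl_iff, Set.mem_singleton_iff] at hq
    rw [W, if_neg hq, div_eq_mul_inv]
    ring_nf
  rw [Filter.EventuallyEq.fderiv_eq heq]
  have hx : HasFDerivAt (fun q : ℝ × ℝ => q.1) (ContinuousLinearMap.fst ℝ ℝ ℝ) p :=
    hasFDerivAt_fst
  have hy : HasFDerivAt (fun q : ℝ × ℝ => q.2) (ContinuousLinearMap.snd ℝ ℝ ℝ) p :=
    hasFDerivAt_snd
  have hnum := ((hx.mul hx).mul (hx.mul hx)).add ((hy.mul hy).mul (hy.mul hy))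
  have hdenFD := (hx.mul hx).add (hy.mul hy)
  have hinv := (hasFDerivAt_inv hden).comp p hdenFD
  have hg := hnum.mul hinv
  simp only [Function.comp_def, Pi.mul_def, Pi.add_def] at hg
  rw [hg.fderiv]
  simp only [ContinuousLinearMap.add_apply, ContinuousLinearMap.smul_apply,
    ContinuousLinearMap.smulRight_apply, ContinuousLinearMap.comp_apply,
    ContinuousLinearMap.coe_fst', ContinuousLinearMap.coe_snd',
    ContinuousLinearMap.one_apply, ContinuousLinearMap.toSpanSingleton_apply, smul_eq_mul, f0, a, b]
  field_simp
  ring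
end

section
/- For every (x,y) ∈ ℝ² with (x,y) ≠ (0,0), the inner product of the gradient of W at (x,y) with f(x,y) equals −(a(x,y)² + b(x,y)²)/(x²+y²). -/
def f1 (p : ℝ × ℝ) : ℝ × ℝ :=
  (-(p.1 ^ 2 + p.2 ^ 2) * a p.1 p.2, -(p.1 ^ 2 + p.2 ^ 2) * b p.1 p.2)

def f (p : ℝ × ℝ) : ℝ × ℝ := f0 p + f1 p

/-- For `(x,y) ≠ (0,0)`, `⟨∇W(x,y), f(x,y)⟩ = -(a² + b²)/(x² + y²)`. -/
theorem stmt5 :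
    ∀ p : ℝ × ℝ, p ≠ 0 →
      fderiv ℝ W p (f p) = -(a p.1 p.2 ^ 2 + b p.1 p.2 ^ 2) / (p.1 ^ 2 + p.2 ^ 2) := by
  intro p hp
  have hD : p.1 ^ 2 + p.2 ^ 2 ≠ 0 := by
    intro h
    apply hp
    have hx : p.1 = 0 := by nlinarith [sq_nonneg p.1, sq_nonneg p.2]
    have hy : p.2 = 0 := by nlinarith [sq_nonneg p.1, sq_nonneg p.2]
    exact Prod.ext hx hy
  have hx : HasFDerivAt (fun q : ℝ × ℝ => q.1) (ContinuousLinearMap.fst ℝ ℝ ℝ) p :=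
    hasFDerivAt_fst
  have hy : HasFDerivAt (fun q : ℝ × ℝ => q.2) (ContinuousLinearMap.snd ℝ ℝ ℝ) p :=
    hasFDerivAt_snd
  have hN := ((hasDerivAt_pow 4 p.1).comp_hasFDerivAt p hx).add
    ((hasDerivAt_pow 4 p.2).comp_hasFDerivAt p hy)
  have hDen := ((hasDerivAt_pow 2 p.1).comp_hasFDerivAt p hx).add
    ((hasDerivAt_pow 2 p.2).comp_hasFDerivAt p hy)
  have hInv := (hasDerivAt_inv hD).comp_hasFDerivAt p hDen
  have hg := hN.mul hInv
  have hW := hg.congr_of_eventuallyEq (f₁ := W) (by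
    filter_upwards [IsOpen.mem_nhds isOpen_compl_singleton hp] with q hq
    simp only [W, Function.comp_apply, div_eq_mul_inv]
    exact if_neg hq)
  rw [hW.fderiv]
  simp only [f, f0, f1, a, b, Prod.mk_add_mk, ContinuousLinearMap.sub_apply,
    ContinuousLinearMap.smul_apply, ContinuousLinearMap.add_apply,
    ContinuousLinearMap.coe_fst', ContinuousLinearMap.coe_snd', Prod.fst_add, Prod.snd_add,
    smul_eq_mul, Pi.add_apply, Function.comp_apply]
  field_simp
  ring
end

section
/- For every (x,y) ∈ ℝ² with (x,y) ≠ (0,0), one has ⟨∇W(x,y), f(x,y)⟩ < 0. Together with W(0,0) = 0, W(x,y) > 0 for (x,y) ≠ (0,0), and radial unboundedness of W, this shows that W is a global Lyapunov function for the vector field f. -/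
lemma ab_pos (x y : ℝ) (hxy : x ≠ 0 ∨ y ≠ 0) : 0 < a x y ^ 2 + b x y ^ 2 := by
  have hDpos : 0 < x ^ 2 + y ^ 2 := by rcases hxy with h | h <;> positivity
  have h4 : 0 < x ^ 4 + y ^ 4 := by rcases hxy with h | h <;> positivity
  simp only [a, b]
  have h5 : 0 < ((2 * x * (x ^ 4 + 2 * x ^ 2 * y ^ 2 - y ^ 4)) ^ 2 +
      (2 * y * (-x ^ 4 + 2 * x ^ 2 * y ^ 2 + y ^ 4)) ^ 2) * (x ^ 2 + y ^ 2) := by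
    nlinarith [sq_nonneg (x * (2 * y * (-x ^ 4 + 2 * x ^ 2 * y ^ 2 + y ^ 4)) -
        y * (2 * x * (x ^ 4 + 2 * x ^ 2 * y ^ 2 - y ^ 4))),
      mul_pos (mul_pos hDpos hDpos) (mul_pos h4 h4)]
  rcases mul_pos_iff.mp h5 with ⟨h, _⟩ | ⟨_, h⟩
  · exact h
  · linarith
lemma key (p : ℝ × ℝ) (hp : p ≠ 0) : fderiv ℝ W p (f p) < 0 := by
  obtain ⟨x, y⟩ := p
  have hxy : x ≠ 0 ∨ y ≠ 0 := by
    by_contra h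
    push_neg at h
    exact hp (by simp [Prod.ext_iff, h.1, h.2])
  have hDpos : 0 < x ^ 2 + y ^ 2 := by rcases hxy with h | h <;> positivity
  have hD : x ^ 2 + y ^ 2 ≠ 0 := ne_of_gt hDpos
  have hx : HasFDerivAt (fun q : ℝ × ℝ => q.1) (ContinuousLinearMap.fst ℝ ℝ ℝ) (x, y) :=
    hasFDerivAt_fst
  have hy : HasFDerivAt (fun q : ℝ × ℝ => q.2) (ContinuousLinearMap.snd ℝ ℝ ℝ) (x, y) :=
    hasFDerivAt_snd
  have hx2 := hx.mul hx
  have hy2 := hy.mul hy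
  have hN := (hx2.mul hx2).add (hy2.mul hy2)
  have hDen := hx2.add hy2
  have hinv0 : HasDerivAt (fun t : ℝ => t⁻¹)
      (-(((x, y).1 * (x, y).1 + (x, y).2 * (x, y).2) ^ 2)⁻¹)
      ((fun q : ℝ × ℝ => q.1 * q.1 + q.2 * q.2) (x, y)) := hasDerivAt_inv (by simpa [sq] using hD)
  have hW := hN.mul (hinv0.hasFDerivAt.comp (x, y) hDen)
  have hEq : W =ᶠ[nhds ((x, y) : ℝ × ℝ)]
      ((fun q : ℝ × ℝ => q.1 * q.1 * (q.1 * q.1) + q.2 * q.2 * (q.2 * q.2)) *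
        ((fun t : ℝ => t⁻¹) ∘ fun q : ℝ × ℝ => q.1 * q.1 + q.2 * q.2)) := by
    have hop : IsOpen {q : ℝ × ℝ | q ≠ 0} := isOpen_ne
    filter_upwards [hop.mem_nhds hp] with q hq
    simp only [W, if_neg hq, div_eq_mul_inv, Pi.mul_apply, Function.comp_apply]
    ring_nf
  rw [hEq.fderiv_eq.trans hW.fderiv]
  obtain ⟨v1, hv1⟩ : ∃ v1 : ℝ, v1 = -b x y + -(x ^ 2 + y ^ 2) * a x y := ⟨_, rfl⟩
  obtain ⟨v2, hv2⟩ : ∃ v2 : ℝ, v2 = a x y + -(x ^ 2 + y ^ 2) * b x y := ⟨_, rfl⟩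
  have hfv : f (x, y) = (v1, v2) := by simp [f, f0, f1, hv1, hv2, Prod.ext_iff]
  rw [hfv]
  simp only [ContinuousLinearMap.add_apply, ContinuousLinearMap.smul_apply,
    ContinuousLinearMap.comp_apply, ContinuousLinearMap.smulRight_apply,
    ContinuousLinearMap.one_apply, ContinuousLinearMap.coe_fst', ContinuousLinearMap.coe_snd',
    smul_eq_mul, Function.comp_apply, Pi.mul_apply, Pi.add_apply,
    ContinuousLinearMap.toSpanSingleton_apply]
  have hE : (x * x * (x * x) + y * y * (y * y)) *
        ((x * v1 + x * v1 + (y * v2 + y * v2)) * -((x * x + y * y) ^ 2)⁻¹) +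
      (x * x + y * y)⁻¹ *
        (x * x * (x * v1 + x * v1) + x * x * (x * v1 + x * v1) +
          (y * y * (y * v2 + y * v2) + y * y * (y * v2 + y * v2))) =
      (a x y * v1 + b x y * v2) / (x ^ 2 + y ^ 2) ^ 2 := by
    have hD' : x * x + y * y ≠ 0 := by simpa [sq] using hD
    rw [eq_div_iff (pow_ne_zero 2 hD)]
    simp only [a, b]
    field_simp
    ring
  rw [hE, hv1, hv2]
  have hnum : a x y * (-b x y + -(x ^ 2 + y ^ 2) * a x y) +
      b x y * (a x y + -(x ^ 2 + y ^ 2) * b x y) =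
      -((x ^ 2 + y ^ 2) * (a x y ^ 2 + b x y ^ 2)) := by ring
  rw [hnum]
  apply div_neg_of_neg_of_pos
  · have := ab_pos x y hxy
    nlinarith
  · positivity


/-- `W` is a global Lyapunov function for `f`: it vanishes at the origin, is
positive away from the origin, is radially unbounded, and its derivative along
`f` is negative away from the origin. -/
theorem stmt6 :
    (∀ p : ℝ × ℝ, p ≠ 0 → fderiv ℝ W p (f p) < 0) ∧
    W 0 = 0 ∧
    (∀ p : ℝ × ℝ, p ≠ 0 → W p > 0) ∧
    Filter.Tendsto W (Filter.cocompact (ℝ × ℝ)) Filter.atTop := by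
  refine ⟨key, by simp [W], ?_, ?_⟩
  · rintro ⟨x, y⟩ hp
    have hxy : x ≠ 0 ∨ y ≠ 0 := by
      by_contra h
      push_neg at h
      exact hp (by simp [Prod.ext_iff, h.1, h.2])
    rw [W, if_neg hp]
    have h1 : 0 < x ^ 4 + y ^ 4 := by rcases hxy with h | h <;> positivity
    have h2 : 0 < x ^ 2 + y ^ 2 := by rcases hxy with h | h <;> positivity
    exact div_pos h1 h2
  · have h1 : Filter.Tendsto (fun p : ℝ × ℝ => ‖p‖ ^ 2 / 2)
        (Filter.cocompact (ℝ × ℝ)) Filter.atTop :=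
      ((Filter.tendsto_pow_atTop two_ne_zero).comp tendsto_norm_cocompact_atTop).atTop_div_const
        two_pos
    refine Filter.tendsto_atTop_mono ?_ h1
    rintro ⟨x, y⟩
    by_cases hp : ((x, y) : ℝ × ℝ) = 0
    · simp [hp, W]
    · have hxy : x ≠ 0 ∨ y ≠ 0 := by
        by_contra h
        push_neg at h
        exact hp (by simp [Prod.ext_iff, h.1, h.2])
      have hDpos : 0 < x ^ 2 + y ^ 2 := by rcases hxy with h | h <;> positivity
      rw [W, if_neg hp]
      have hn : ‖((x, y) : ℝ × ℝ)‖ ^ 2 ≤ x ^ 2 + y ^ 2 := by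
        rw [Prod.norm_def]
        simp only [Real.norm_eq_abs]
        rcases max_choice |x| |y| with h | h <;> rw [h] <;>
          nlinarith [sq_abs x, sq_abs y, sq_nonneg x, sq_nonneg y]
      have hcmp : (x ^ 2 + y ^ 2) / 2 ≤ (x ^ 4 + y ^ 4) / (x ^ 2 + y ^ 2) := by
        rw [div_le_div_iff₀ two_pos hDpos]
        nlinarith [sq_nonneg (x ^ 2 - y ^ 2)]
      calc ‖((x, y) : ℝ × ℝ)‖ ^ 2 / 2 ≤ (x ^ 2 + y ^ 2) / 2 := by linarith
        _ ≤ _ := hcmp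
end

section
/- The origin is a globally asymptotically stable equilibrium of the system ẋ = f(x): (i) f(0,0) = (0,0); (ii) for every ε > 0 there exists δ > 0 such that every differentiable curve γ: [0,∞) → ℝ² satisfying γ'(t) = f(γ(t)) for all t ≥ 0 and ‖γ(0)‖ < δ satisfies ‖γ(t)‖ < ε for all t ≥ 0; and (iii) every differentiable curve γ: [0,∞) → ℝ² satisfying γ'(t) = f(γ(t)) for all t ≥ 0 satisfies γ(t) → (0,0) as t → ∞. -/
/-- The Lyapunov function `V(x,y) = (x⁴+y⁴)²/(x²+y²)²`.  It is exactly conserved by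
the rotational part `f0` and strictly decreased by the dissipative part `f1`. -/
noncomputable def V (p : ℝ × ℝ) : ℝ := (p.1 ^ 4 + p.2 ^ 4) ^ 2 / (p.1 ^ 2 + p.2 ^ 2) ^ 2

lemma V_nonneg (p : ℝ × ℝ) : 0 ≤ V p := by
  unfold V; positivity

lemma norm_choice (p : ℝ × ℝ) : ‖p‖ = |p.1| ∨ ‖p‖ = |p.2| := by
  rw [Prod.norm_def, Real.norm_eq_abs, Real.norm_eq_abs]
  exact max_choice _ _

lemma abs_fst_le' (p : ℝ × ℝ) : |p.1| ≤ ‖p‖ := by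
  simpa [Real.norm_eq_abs] using norm_fst_le p

lemma abs_snd_le' (p : ℝ × ℝ) : |p.2| ≤ ‖p‖ := by
  simpa [Real.norm_eq_abs] using norm_snd_le p

lemma norm4_le_N (p : ℝ × ℝ) : ‖p‖ ^ 4 ≤ p.1 ^ 4 + p.2 ^ 4 := by
  rcases norm_choice p with h | h
  · have h4 : ‖p‖ ^ 4 = p.1 ^ 4 := by
      rw [h, ← abs_pow]; exact abs_of_nonneg (by positivity)
    nlinarith [sq_nonneg (p.2 ^ 2)]
  · have h4 : ‖p‖ ^ 4 = p.2 ^ 4 := by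
      rw [h, ← abs_pow]; exact abs_of_nonneg (by positivity)
    nlinarith [sq_nonneg (p.1 ^ 2)]

lemma norm2_le_D (p : ℝ × ℝ) : ‖p‖ ^ 2 ≤ p.1 ^ 2 + p.2 ^ 2 := by
  rcases norm_choice p with h | h
  · have h2 : ‖p‖ ^ 2 = p.1 ^ 2 := by rw [h, ← abs_pow]; exact abs_of_nonneg (by positivity)
    nlinarith [sq_nonneg p.2]
  · have h2 : ‖p‖ ^ 2 = p.2 ^ 2 := by rw [h, ← abs_pow]; exact abs_of_nonneg (by positivity)
    nlinarith [sq_nonneg p.1]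

lemma N_le_norm4 (p : ℝ × ℝ) : p.1 ^ 4 + p.2 ^ 4 ≤ 2 * ‖p‖ ^ 4 := by
  have hx := abs_fst_le' p
  have hy := abs_snd_le' p
  have hx4 : p.1 ^ 4 ≤ ‖p‖ ^ 4 := by
    calc p.1 ^ 4 = |p.1| ^ 4 := by rw [← abs_pow]; exact (abs_of_nonneg (by positivity)).symm
      _ ≤ ‖p‖ ^ 4 := pow_le_pow_left₀ (abs_nonneg _) hx 4
  have hy4 : p.2 ^ 4 ≤ ‖p‖ ^ 4 := by
    calc p.2 ^ 4 = |p.2| ^ 4 := by rw [← abs_pow]; exact (abs_of_nonneg (by positivity)).symm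
      _ ≤ ‖p‖ ^ 4 := pow_le_pow_left₀ (abs_nonneg _) hy 4
  linarith

lemma D_le_norm2 (p : ℝ × ℝ) : p.1 ^ 2 + p.2 ^ 2 ≤ 2 * ‖p‖ ^ 2 := by
  have hx := abs_fst_le' p
  have hy := abs_snd_le' p
  have hx2 : p.1 ^ 2 ≤ ‖p‖ ^ 2 := by
    calc p.1 ^ 2 = |p.1| ^ 2 := (sq_abs _).symm
      _ ≤ ‖p‖ ^ 2 := pow_le_pow_left₀ (abs_nonneg _) hx 2
  have hy2 : p.2 ^ 2 ≤ ‖p‖ ^ 2 := by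
    calc p.2 ^ 2 = |p.2| ^ 2 := (sq_abs _).symm
      _ ≤ ‖p‖ ^ 2 := pow_le_pow_left₀ (abs_nonneg _) hy 2
  linarith

lemma V_le (p : ℝ × ℝ) : V p ≤ 4 * ‖p‖ ^ 4 := by
  by_cases hp : p = 0
  · simp [hp, V]
  · have hm : 0 < ‖p‖ := norm_pos_iff.mpr hp
    have hD := norm2_le_D p
    have hDpos : 0 < p.1 ^ 2 + p.2 ^ 2 := lt_of_lt_of_le (by positivity) hD
    have hN := N_le_norm4 p
    have hN0 : 0 ≤ p.1 ^ 4 + p.2 ^ 4 := by positivity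
    rw [V, div_le_iff₀ (by positivity : (0:ℝ) < (p.1 ^ 2 + p.2 ^ 2) ^ 2)]
    have hN2 : (p.1 ^ 4 + p.2 ^ 4) ^ 2 ≤ 4 * ‖p‖ ^ 8 := by nlinarith
    have hD2 : ‖p‖ ^ 4 ≤ (p.1 ^ 2 + p.2 ^ 2) ^ 2 := by nlinarith [sq_nonneg ‖p‖]
    nlinarith [pow_pos hm 4]

lemma le_V (p : ℝ × ℝ) : ‖p‖ ^ 4 ≤ 4 * V p := by
  by_cases hp : p = 0
  · simp [hp, V]
  · have hm : 0 < ‖p‖ := norm_pos_iff.mpr hp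
    have hD := D_le_norm2 p
    have hDlow := norm2_le_D p
    have hDpos : 0 < p.1 ^ 2 + p.2 ^ 2 := lt_of_lt_of_le (by positivity) hDlow
    have hN := norm4_le_N p
    rw [V]
    rw [show 4 * ((p.1 ^ 4 + p.2 ^ 4) ^ 2 / (p.1 ^ 2 + p.2 ^ 2) ^ 2)
        = (4 * (p.1 ^ 4 + p.2 ^ 4) ^ 2) / (p.1 ^ 2 + p.2 ^ 2) ^ 2 by ring]
    rw [le_div_iff₀ (by positivity : (0:ℝ) < (p.1 ^ 2 + p.2 ^ 2) ^ 2)]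
    have hD2 : (p.1 ^ 2 + p.2 ^ 2) ^ 2 ≤ 4 * ‖p‖ ^ 4 := by nlinarith [sq_nonneg ‖p‖]
    have hN2 : ‖p‖ ^ 8 ≤ (p.1 ^ 4 + p.2 ^ 4) ^ 2 := by nlinarith [pow_pos hm 4]
    nlinarith [pow_pos hm 4]

lemma hasFDerivAt_V_zero : HasFDerivAt V (0 : ℝ × ℝ →L[ℝ] ℝ) 0 := by
  rw [hasFDerivAt_iff_isLittleO_nhds_zero]
  rw [Asymptotics.isLittleO_iff]
  intro c hc
  have hball := Metric.ball_mem_nhds (0 : ℝ × ℝ) (show (0:ℝ) < min 1 (c / 4) by positivity)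
  filter_upwards [hball] with p hp
  rw [Metric.mem_ball, dist_zero_right] at hp
  have h1 : ‖p‖ < 1 := lt_of_lt_of_le hp (min_le_left _ _)
  have h2 : ‖p‖ < c / 4 := lt_of_lt_of_le hp (min_le_right _ _)
  have hV0 : V 0 = 0 := by norm_num [V]
  simp only [zero_add, ContinuousLinearMap.zero_apply, sub_zero, hV0]
  rw [Real.norm_eq_abs, abs_of_nonneg (V_nonneg p)]
  have h3 := V_le p
  have h0 := norm_nonneg p
  have ha : ‖p‖ ^ 2 ≤ ‖p‖ := by nlinarith
  have hb : ‖p‖ ^ 4 ≤ ‖p‖ ^ 2 := by nlinarith [sq_nonneg ‖p‖]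
  have hc2 : ‖p‖ * ‖p‖ ≤ (c / 4) * ‖p‖ := mul_le_mul_of_nonneg_right h2.le h0
  nlinarith [ha, hb, hc2]

lemma comp_fst {γ : ℝ → ℝ × ℝ} {q : ℝ × ℝ} {t : ℝ} (h : HasDerivAt γ q t) :
    HasDerivAt (fun s => (γ s).1) q.1 t := by
  exact (hasFDerivAt_fst.comp_hasDerivAt t h)

lemma comp_snd {γ : ℝ → ℝ × ℝ} {q : ℝ × ℝ} {t : ℝ} (h : HasDerivAt γ q t) :
    HasDerivAt (fun s => (γ s).2) q.2 t := by
  exact (hasFDerivAt_snd.comp_hasDerivAt t h)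

/-- Key derivative computation: along any solution, `V` has derivative `E ≤ 0`, and moreover
`E ≤ -8 V N D` where `N = x⁴+y⁴` and `D = x²+y²`. -/
lemma deriv_V_along {γ : ℝ → ℝ × ℝ} {t : ℝ} (h : HasDerivAt γ (f (γ t)) t) :
    ∃ E : ℝ, HasDerivAt (fun s => V (γ s)) E t ∧ E ≤ 0 ∧
      E ≤ -8 * V (γ t) * ((γ t).1 ^ 4 + (γ t).2 ^ 4) * ((γ t).1 ^ 2 + (γ t).2 ^ 2) := by
  by_cases hz : γ t = 0
  · refine ⟨0, ?_, le_refl 0, ?_⟩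
    · have h0 : HasFDerivAt V (0 : ℝ × ℝ →L[ℝ] ℝ) (γ t) := hz ▸ hasFDerivAt_V_zero
      have := h0.comp_hasDerivAt t h
      exact this
    · rw [hz]; norm_num [V]
  · obtain ⟨x, y, hp⟩ : ∃ x y, γ t = (x, y) := ⟨_, _, rfl⟩
    rw [hp] at h hz ⊢
    have hxy : x ^ 2 + y ^ 2 ≠ 0 := by
      intro hc
      apply hz
      have hx : x = 0 := by nlinarith [sq_nonneg x, sq_nonneg y]
      have hy : y = 0 := by nlinarith [sq_nonneg x, sq_nonneg y]
      rw [hx, hy]; rfl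
    have hD : 0 < x ^ 2 + y ^ 2 := lt_of_le_of_ne (by positivity) (Ne.symm hxy)
    have hu : HasDerivAt (fun s => (γ s).1) (f (x, y)).1 t := comp_fst h
    have hv : HasDerivAt (fun s => (γ s).2) (f (x, y)).2 t := comp_snd h
    have hne : ((γ t).1 ^ 2 + (γ t).2 ^ 2) ^ 2 ≠ 0 := by
      rw [hp]; simpa using pow_ne_zero 2 hxy
    have hg0 := (((hu.pow 4).add (hv.pow 4)).pow 2).div
      (((hu.pow 2).add (hv.pow 2)).pow 2) hne
    rw [hp] at hg0
    set N : ℝ := x ^ 4 + y ^ 4 with hNdef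
    set Q : ℝ := N ^ 2 + 4 * x ^ 2 * y ^ 2 * N - 8 * x ^ 4 * y ^ 4 with hQdef
    have hg : HasDerivAt (fun s => V (γ s)) (-8 * N * Q / (x ^ 2 + y ^ 2)) t := by
      convert hg0 using 1
      · rfl
      · rfl
      · rfl
      rw [hNdef, hQdef]
      simp only [f, f0, f1, a, b, Prod.fst_add, Prod.snd_add, Pi.add_apply, Pi.pow_apply, hp]
      push_cast
      field_simp
      ring
    have hN0 : 0 ≤ N := by rw [hNdef]; positivity
    have hQN : N ^ 2 ≤ Q := by
      rw [hQdef, hNdef]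
      nlinarith [sq_nonneg (x * y * (x ^ 2 - y ^ 2))]
    have hQ0 : 0 ≤ Q := le_trans (by positivity) hQN
    refine ⟨_, hg, ?_, ?_⟩
    · apply div_nonpos_of_nonpos_of_nonneg _ hD.le
      nlinarith [mul_nonneg hN0 hQ0]
    · have hVxy : V (x, y) = N ^ 2 / (x ^ 2 + y ^ 2) ^ 2 := rfl
      rw [hVxy]
      rw [show -8 * (N ^ 2 / (x ^ 2 + y ^ 2) ^ 2) * N * (x ^ 2 + y ^ 2)
          = -8 * N ^ 3 / (x ^ 2 + y ^ 2) by field_simp]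
      rw [div_le_div_iff₀ hD hD]
      nlinarith [mul_nonneg (mul_nonneg hN0 hD.le) (mul_nonneg hD.le (sub_nonneg.mpr hQN))]

/-- If the derivative of `V ∘ γ` always satisfies `E + C ≤ 0`, then `V(γ t) + C t` is
antitone on `[0, ∞)`. -/
lemma antitone_aux {γ : ℝ → ℝ × ℝ} (hγ : ∀ t : ℝ, t ≥ 0 → HasDerivAt γ (f (γ t)) t)
    (C : ℝ)
    (hE : ∀ t : ℝ, t ≥ 0 → ∀ E : ℝ, HasDerivAt (fun s => V (γ s)) E t → E + C ≤ 0) :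
    AntitoneOn (fun t => V (γ t) + C * t) (Set.Ici 0) := by
  have hder : ∀ t : ℝ, t ≥ 0 → ∃ E : ℝ,
      HasDerivAt (fun s => V (γ s) + C * s) E t ∧ E ≤ 0 := by
    intro t ht
    obtain ⟨E, hEd, -, -⟩ := deriv_V_along (hγ t ht)
    have hlin : HasDerivAt (fun s : ℝ => C * s) C t := by
      simpa using (hasDerivAt_id t).const_mul C
    exact ⟨E + C, hEd.add hlin, hE t ht E hEd⟩
  apply antitoneOn_of_deriv_nonpos (convex_Ici 0)
  · intro t ht
    obtain ⟨E, hq, -⟩ := hder t ht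
    exact hq.continuousAt.continuousWithinAt
  · intro t ht
    rw [interior_Ici] at ht
    obtain ⟨E, hq, -⟩ := hder t (le_of_lt ht)
    exact hq.differentiableAt.differentiableWithinAt
  · intro t ht
    rw [interior_Ici] at ht
    obtain ⟨E, hq, hE0⟩ := hder t (le_of_lt ht)
    rw [hq.deriv]; exact hE0

lemma V_antitone {γ : ℝ → ℝ × ℝ} (hγ : ∀ t : ℝ, t ≥ 0 → HasDerivAt γ (f (γ t)) t) :
    AntitoneOn (fun t => V (γ t)) (Set.Ici 0) := by
  have h := antitone_aux hγ 0 (by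
    intro t ht E hEd
    obtain ⟨E₂, hEd₂, h0, -⟩ := deriv_V_along (hγ t ht)
    rw [hEd.unique hEd₂]
    linarith)
  simpa using h

/-- The origin is a globally asymptotically stable equilibrium of `ẋ = f(x)`:
(i) `f(0) = 0`; (ii) Lyapunov stability; (iii) global attractivity. -/
theorem stmt7 :
    f 0 = 0 ∧
    (∀ ε : ℝ, ε > 0 → ∃ δ : ℝ, δ > 0 ∧
      ∀ γ : ℝ → ℝ × ℝ, (∀ t : ℝ, t ≥ 0 → HasDerivAt γ (f (γ t)) t) →
        ‖γ 0‖ < δ → ∀ t : ℝ, t ≥ 0 → ‖γ t‖ < ε) ∧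
    (∀ γ : ℝ → ℝ × ℝ, (∀ t : ℝ, t ≥ 0 → HasDerivAt γ (f (γ t)) t) →
      Filter.Tendsto γ Filter.atTop (nhds 0)) := by
  refine ⟨?_, ?_, ?_⟩
  · -- f 0 = 0
    norm_num [f, f0, f1, a, b, Prod.ext_iff]
  · -- stability
    intro ε hε
    refine ⟨ε / 2, by positivity, ?_⟩
    intro γ hγ h0 t ht
    have hA := V_antitone hγ
    have hVt : V (γ t) ≤ V (γ 0) := hA (Set.self_mem_Ici) (by exact ht) ht
    have h1 := le_V (γ t)
    have h2 := V_le (γ 0)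
    have h3 : ‖γ 0‖ ^ 4 < (ε / 2) ^ 4 :=
      pow_lt_pow_left₀ h0 (norm_nonneg _) (by norm_num)
    have h4 : ‖γ t‖ ^ 4 < ε ^ 4 := by nlinarith
    exact lt_of_pow_lt_pow_left₀ 4 hε.le h4
  · -- attractivity
    intro γ hγ
    have hA := V_antitone hγ
    rw [NormedAddCommGroup.tendsto_nhds_zero]
    intro ε hε
    set ε' : ℝ := ε ^ 4 / 4 with hε'def
    have hε' : 0 < ε' := by positivity
    -- first, find a time T at which V (γ T) < ε'
    have hT : ∃ T : ℝ, 0 ≤ T ∧ V (γ T) < ε' := by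
      by_contra hcon
      push_neg at hcon
      have hbig : ∀ T : ℝ, 0 ≤ T → ε' ≤ V (γ T) := fun T hT0 => hcon T hT0
      set s : ℝ := Real.sqrt (ε' / 4) with hsdef
      have hs : 0 < s := Real.sqrt_pos.mpr (by positivity)
      set C : ℝ := 8 * ε' * (ε' / 4) * s with hCdef
      have hC : 0 < C := by positivity
      have hanti := antitone_aux hγ C (by
        intro t ht E hEd
        obtain ⟨E₂, hEd₂, -, h2⟩ := deriv_V_along (hγ t ht)
        rw [hEd.unique hEd₂]
        set p := γ t with hpdef
        have hV : ε' ≤ V p := hbig t ht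
        have hm4 : ε' / 4 ≤ ‖p‖ ^ 4 := by
          have := V_le p
          linarith
        have hN : ε' / 4 ≤ p.1 ^ 4 + p.2 ^ 4 := le_trans hm4 (norm4_le_N p)
        have hDs : s ≤ p.1 ^ 2 + p.2 ^ 2 := by
          have h1 : s ≤ ‖p‖ ^ 2 := by
            rw [hsdef, show ‖p‖ ^ 2 = Real.sqrt ((‖p‖ ^ 2) ^ 2) from
              (Real.sqrt_sq (sq_nonneg _)).symm]
            apply Real.sqrt_le_sqrt
            nlinarith
          linarith [norm2_le_D p]
        have hstep : C ≤ 8 * V p * (p.1 ^ 4 + p.2 ^ 4) * (p.1 ^ 2 + p.2 ^ 2) := by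
          have ha1 : 8 * ε' * (ε' / 4) ≤ 8 * V p * (p.1 ^ 4 + p.2 ^ 4) := by
            apply mul_le_mul (by linarith) hN (by linarith) (by linarith [V_nonneg p])
          rw [hCdef]
          apply mul_le_mul ha1 hDs hs.le
          exact mul_nonneg (mul_nonneg (by norm_num) (V_nonneg p)) (by positivity)
        linarith)
      set T : ℝ := (V (γ 0) + 1) / C with hTdef
      have hT0 : 0 ≤ T := by
        apply div_nonneg _ hC.le
        have := V_nonneg (γ 0)
        linarith
      have hle := hanti (Set.self_mem_Ici) (show T ∈ Set.Ici (0:ℝ) from hT0) hT0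
      simp only [mul_zero, add_zero] at hle
      rw [hTdef, mul_div_cancel₀ _ (ne_of_gt hC)] at hle
      have := V_nonneg (γ T)
      linarith
    obtain ⟨T, hT0, hVT⟩ := hT
    filter_upwards [Filter.eventually_ge_atTop T] with t ht'
    have ht0 : (0:ℝ) ≤ t := le_trans hT0 ht'
    have hVt : V (γ t) ≤ V (γ T) := hA (show T ∈ Set.Ici (0:ℝ) from hT0) (by exact ht0) ht'
    have h1 := le_V (γ t)
    have h4 : ‖γ t‖ ^ 4 < ε ^ 4 := by
      rw [hε'def] at hVT
      nlinarith
    exact lt_of_pow_lt_pow_left₀ 4 hε.le h4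
end

section
/- The vector field f admits no local polynomial Lyapunov function: there do not exist a polynomial function p: ℝ² → ℝ and a real number ε > 0 such that p(0,0) = 0, p(x,y) > 0 for all (x,y) with 0 < ‖(x,y)‖ < ε, and ⟨∇p(x,y), f(x,y)⟩ < 0 for all (x,y) with 0 < ‖(x,y)‖ < ε. -/
open MvPolynomial

/-! ### Auxiliary lemmas -/

section Aux

lemma evalSmul {φ : MvPolynomial (Fin 2) ℝ} {n : ℕ} (h : φ.IsHomogeneous n)
    (c : ℝ) (x : Fin 2 → ℝ) : eval (c • x) φ = c ^ n * eval x φ := by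
  rw [eval_eq, eval_eq, Finset.mul_sum]
  refine Finset.sum_congr rfl fun d hd => ?_
  have hdeg : d.degree = n := by
    rw [Finsupp.degree_eq_weight_one]; exact h (mem_support_iff.mp hd)
  calc coeff d φ * ∏ i ∈ d.support, (c • x) i ^ d i
      = coeff d φ * ((∏ i ∈ d.support, c ^ d i) * ∏ i ∈ d.support, x i ^ d i) := by
        rw [← Finset.prod_mul_distrib]
        simp [mul_pow]
    _ = c ^ n * (coeff d φ * ∏ i ∈ d.support, x i ^ d i) := by
        rw [Finset.prod_pow_eq_pow_sum]
        rw [show ∑ i ∈ d.support, d i = n from hdeg ▸ rfl]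
        ring

noncomputable def gradCLM (P : MvPolynomial (Fin 2) ℝ) (v : ℝ × ℝ) : ℝ × ℝ →L[ℝ] ℝ :=
  (eval ![v.1, v.2] (pderiv 0 P)) • ContinuousLinearMap.fst ℝ ℝ ℝ
    + (eval ![v.1, v.2] (pderiv 1 P)) • ContinuousLinearMap.snd ℝ ℝ ℝ

lemma gradCLM_apply (P : MvPolynomial (Fin 2) ℝ) (v u : ℝ × ℝ) :
    gradCLM P v u = eval ![v.1, v.2] (pderiv 0 P) * u.1
      + eval ![v.1, v.2] (pderiv 1 P) * u.2 := rfl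

lemma hasFDerivAt_eval (P : MvPolynomial (Fin 2) ℝ) (v : ℝ × ℝ) :
    HasFDerivAt (fun w : ℝ × ℝ => eval ![w.1, w.2] P) (gradCLM P v) v := by
  induction P using MvPolynomial.induction_on with
  | C c =>
    have h0 : gradCLM (C c) v = 0 := by
      ext <;> simp [gradCLM]
    rw [h0]
    simpa using hasFDerivAt_const c v
  | add p q hp hq =>
    have h0 : gradCLM (p + q) v = gradCLM p v + gradCLM q v := by
      ext <;> simp [gradCLM]
    rw [h0]
    exact (hp.add hq).congr_of_eventuallyEq (Filter.Eventually.of_forall fun w => by simp)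
  | mul_X p i hp =>
    fin_cases i
    · have h1 : HasFDerivAt (fun w : ℝ × ℝ => w.1) (ContinuousLinearMap.fst ℝ ℝ ℝ) v :=
        hasFDerivAt_fst
      have h2 := hp.mul h1
      refine (h2.congr_fderiv ?_).congr_of_eventuallyEq (Filter.Eventually.of_forall fun w => ?_)
      · ext <;>
          simp [gradCLM, pderiv_mul, pderiv_X_self, pderiv_X_of_ne,
            ContinuousLinearMap.smul_apply]
      · simp
    · have h1 : HasFDerivAt (fun w : ℝ × ℝ => w.2) (ContinuousLinearMap.snd ℝ ℝ ℝ) v :=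
        hasFDerivAt_snd
      have h2 := hp.mul h1
      refine (h2.congr_fderiv ?_).congr_of_eventuallyEq (Filter.Eventually.of_forall fun w => ?_)
      · ext <;>
          simp [gradCLM, pderiv_mul, pderiv_X_self, pderiv_X_of_ne,
            ContinuousLinearMap.smul_apply]
      · simp

lemma pderivScale {φ : MvPolynomial (Fin 2) ℝ} {n : ℕ} (h : φ.IsHomogeneous n)
    (t : ℝ) (v : ℝ × ℝ) (i : Fin 2) :
    t * eval ![t * v.1, t * v.2] (pderiv i φ)
      = t ^ n * eval ![v.1, v.2] (pderiv i φ) := by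
  have hfun : (fun w : ℝ × ℝ => eval ![t * w.1, t * w.2] φ)
      = fun w : ℝ × ℝ => t ^ n * eval ![w.1, w.2] φ := by
    funext w
    have hm : (![t * w.1, t * w.2] : Fin 2 → ℝ) = t • ![w.1, w.2] := by
      funext j; fin_cases j <;> simp
    rw [hm, evalSmul h]
  have hsm : HasFDerivAt (fun w : ℝ × ℝ => t • w)
      (t • ContinuousLinearMap.id ℝ (ℝ × ℝ)) v := (hasFDerivAt_id v).const_smul t
  have h1 : HasFDerivAt (fun w : ℝ × ℝ => eval ![t * w.1, t * w.2] φ)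
      ((gradCLM φ (t • v)).comp (t • ContinuousLinearMap.id ℝ (ℝ × ℝ))) v := by
    have hc := (hasFDerivAt_eval φ (t • v)).comp v hsm
    exact hc
  have h2 : HasFDerivAt (fun w : ℝ × ℝ => eval ![t * w.1, t * w.2] φ)
      ((t ^ n : ℝ) • gradCLM φ v) v := by
    rw [hfun]
    exact (hasFDerivAt_eval φ v).const_smul (t ^ n)
  have heq := h1.unique h2
  fin_cases i
  · have := congrArg (fun (L : ℝ × ℝ →L[ℝ] ℝ) => L (1, 0)) heq
    simpa [gradCLM_apply, Prod.smul_fst, Prod.smul_snd, smul_eq_mul, mul_comm] using this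
  · have := congrArg (fun (L : ℝ × ℝ →L[ℝ] ℝ) => L (0, 1)) heq
    simpa [gradCLM_apply, Prod.smul_fst, Prod.smul_snd, smul_eq_mul, mul_comm] using this

/-! ### The invariant closed curve of `f0` -/

noncomputable def gam1 (θ : ℝ) : ℝ := Real.cos θ / Real.sqrt (1 + Real.cos (2*θ)^2)
noncomputable def gam2 (θ : ℝ) : ℝ := Real.sin θ / Real.sqrt (1 + Real.cos (2*θ)^2)

lemma sqrtQ_pos (θ : ℝ) : 0 < Real.sqrt (1 + Real.cos (2*θ)^2) := by
  apply Real.sqrt_pos.2; positivity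

lemma sqrtQ_sq (θ : ℝ) : Real.sqrt (1 + Real.cos (2*θ)^2) ^ 2 = 1 + Real.cos (2*θ)^2 := by
  rw [Real.sq_sqrt]; positivity

lemma hasDerivAt_sqrtQ (θ : ℝ) :
    HasDerivAt (fun θ : ℝ => Real.sqrt (1 + Real.cos (2*θ)^2))
      (1 / (2 * Real.sqrt (1 + Real.cos (2*θ)^2)) *
        (2 * Real.cos (2*θ) * (-Real.sin (2*θ) * 2))) θ := by
  have hc2 : HasDerivAt (fun θ : ℝ => Real.cos (2*θ)) (-Real.sin (2*θ) * 2) θ := by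
    simpa [Function.comp_def] using (Real.hasDerivAt_cos (2*θ)).comp θ ((hasDerivAt_id θ).const_mul 2)
  have hq : HasDerivAt (fun θ : ℝ => 1 + Real.cos (2*θ)^2)
      (2 * Real.cos (2*θ) * (-Real.sin (2*θ) * 2)) θ := by
    simpa [mul_comm, mul_assoc] using ((hc2.pow 2).const_add 1)
  have h0 : (1 + Real.cos (2*θ)^2) ≠ 0 := by positivity
  simpa [mul_comm, Function.comp_def] using (Real.hasDerivAt_sqrt h0).comp θ hq

lemma gam1_hasDeriv (θ : ℝ) :
    HasDerivAt gam1
      ((-Real.sin θ * Real.sqrt (1 + Real.cos (2*θ)^2) -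
        Real.cos θ * (1 / (2 * Real.sqrt (1 + Real.cos (2*θ)^2)) *
        (2 * Real.cos (2*θ) * (-Real.sin (2*θ) * 2)))) / Real.sqrt (1 + Real.cos (2*θ)^2) ^ 2) θ :=
  (Real.hasDerivAt_cos θ).div (hasDerivAt_sqrtQ θ) (sqrtQ_pos θ).ne'

lemma gam2_hasDeriv (θ : ℝ) :
    HasDerivAt gam2
      ((Real.cos θ * Real.sqrt (1 + Real.cos (2*θ)^2) -
        Real.sin θ * (1 / (2 * Real.sqrt (1 + Real.cos (2*θ)^2)) *
        (2 * Real.cos (2*θ) * (-Real.sin (2*θ) * 2)))) / Real.sqrt (1 + Real.cos (2*θ)^2) ^ 2) θ :=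
  (Real.hasDerivAt_sin θ).div (hasDerivAt_sqrtQ θ) (sqrtQ_pos θ).ne'

lemma key1 (θ : ℝ) :
    (-Real.sin θ * Real.sqrt (1 + Real.cos (2*θ)^2) -
        Real.cos θ * (1 / (2 * Real.sqrt (1 + Real.cos (2*θ)^2)) *
        (2 * Real.cos (2*θ) * (-Real.sin (2*θ) * 2)))) / Real.sqrt (1 + Real.cos (2*θ)^2) ^ 2
      = (1 + Real.cos (2*θ)^2) * (f0 (gam1 θ, gam2 θ)).1 := by
  have hS := sqrtQ_pos θ
  have hS2 := sqrtQ_sq θ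
  set S := Real.sqrt (1 + Real.cos (2*θ)^2) with hSdef
  set c := Real.cos θ
  set s := Real.sin θ
  have hc2 : Real.cos (2*θ) = c^2 - s^2 := Real.cos_two_mul' θ
  have hs2 : Real.sin (2*θ) = 2 * s * c := Real.sin_two_mul θ
  have hpyth : s^2 + c^2 = 1 := Real.sin_sq_add_cos_sq θ
  simp only [f0, b, gam1, gam2, ← hSdef]
  have hS2' : S^2 = 1 + (c^2 - s^2)^2 := by rw [hS2, hc2]
  rw [hc2, hs2]
  field_simp
  ring_nf
  linear_combination (-s*(S^2 + (1+(c^2-s^2)^2)) + 4*s*c^2*(c^2-s^2)) * hS2'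
    + (s*(1+(c^2-s^2)^2)*(c^2+s^2+1)) * hpyth

lemma key2 (θ : ℝ) :
    (Real.cos θ * Real.sqrt (1 + Real.cos (2*θ)^2) -
        Real.sin θ * (1 / (2 * Real.sqrt (1 + Real.cos (2*θ)^2)) *
        (2 * Real.cos (2*θ) * (-Real.sin (2*θ) * 2)))) / Real.sqrt (1 + Real.cos (2*θ)^2) ^ 2
      = (1 + Real.cos (2*θ)^2) * (f0 (gam1 θ, gam2 θ)).2 := by
  have hS := sqrtQ_pos θ
  have hS2 := sqrtQ_sq θ
  set S := Real.sqrt (1 + Real.cos (2*θ)^2) with hSdef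
  set c := Real.cos θ
  set s := Real.sin θ
  have hc2 : Real.cos (2*θ) = c^2 - s^2 := Real.cos_two_mul' θ
  have hs2 : Real.sin (2*θ) = 2 * s * c := Real.sin_two_mul θ
  have hpyth : s^2 + c^2 = 1 := Real.sin_sq_add_cos_sq θ
  simp only [f0, a, gam1, gam2, ← hSdef]
  have hS2' : S^2 = 1 + (c^2 - s^2)^2 := by rw [hS2, hc2]
  rw [hc2, hs2]
  field_simp
  ring_nf
  linear_combination (c*(S^2 + (1+(c^2-s^2)^2)) + 4*c*s^2*(c^2-s^2)) * hS2'
    + (-(c*(1+(c^2-s^2)^2)*(c^2+s^2+1))) * hpyth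

end Aux

/-- `f` admits no local polynomial Lyapunov function. -/
theorem stmt8 :
    ¬ ∃ (P : MvPolynomial (Fin 2) ℝ) (ε : ℝ), ε > 0 ∧
      (MvPolynomial.eval ![(0 : ℝ), 0] P = 0) ∧
      (∀ v : ℝ × ℝ, 0 < ‖v‖ → ‖v‖ < ε → 0 < MvPolynomial.eval ![v.1, v.2] P) ∧
      (∀ v : ℝ × ℝ, 0 < ‖v‖ → ‖v‖ < ε →
        fderiv ℝ (fun w : ℝ × ℝ => MvPolynomial.eval ![w.1, w.2] P) v (f v) < 0) := by
  classical
  rintro ⟨P, ε, hε, hP00, -, hLya⟩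
  -- trivial case P = 0
  by_cases hPz : P = 0
  · have h0 := hLya (ε/2, 0)
      (by
        rw [norm_pos_iff]
        intro hz
        rw [Prod.ext_iff] at hz
        simp only [Prod.fst, Prod.snd] at hz
        have : ε / 2 = 0 := hz.1
        linarith)
      (by
        rw [Prod.norm_def]
        simp only [norm_zero, Real.norm_eq_abs]
        rw [abs_of_pos (by linarith : (0:ℝ) < ε/2), max_eq_left (by linarith)]
        linarith)
    rw [hPz] at h0
    simp at h0
  -- minimal nonzero homogeneous component
  have hex : ∃ k, homogeneousComponent k P ≠ 0 := by
    by_contra hall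
    push_neg at hall
    apply hPz
    have := sum_homogeneousComponent P
    rw [Finset.sum_congr rfl (fun k _ => hall k)] at this
    simpa using this.symm
  set m := Nat.find hex with hmdef
  have hpm : homogeneousComponent m P ≠ 0 := Nat.find_spec hex
  have hmin : ∀ k, k < m → homogeneousComponent k P = 0 := by
    intro k hk
    have := Nat.find_min hex hk
    simpa using this
  have hm1 : 1 ≤ m := by
    rcases Nat.eq_zero_or_pos m with h | h
    · exfalso
      apply hpm
      rw [h, homogeneousComponent_zero]
      have hc0 : coeff 0 P = 0 := by
        have h0 := hP00
        rw [show (![(0:ℝ),0]) = (0 : Fin 2 → ℝ) from by funext i; fin_cases i <;> rfl] at h0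
        rw [eval_zero, constantCoeff_eq] at h0
        exact h0
      rw [hc0, map_zero]
    · exact h
  set N := P.totalDegree with hN
  have hmN : m ≤ N := by
    by_contra h
    exact hpm (homogeneousComponent_eq_zero m P (by omega))
  set pc : ℕ → MvPolynomial (Fin 2) ℝ := fun k => homogeneousComponent k P with hpc
  set A : ℕ → ℝ × ℝ → ℝ := fun k w =>
    eval ![w.1, w.2] (pderiv 0 (pc k)) * (f0 w).1
      + eval ![w.1, w.2] (pderiv 1 (pc k)) * (f0 w).2 with hA
  set B : ℕ → ℝ × ℝ → ℝ := fun k w =>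
    eval ![w.1, w.2] (pderiv 0 (pc k)) * (f1 w).1
      + eval ![w.1, w.2] (pderiv 1 (pc k)) * (f1 w).2 with hB
  -- Main consequence of the Lyapunov inequality:
  have hAm : ∀ w : ℝ × ℝ, w ≠ 0 → A m w ≤ 0 := by
    intro w hw
    have hnw : 0 < ‖w‖ := norm_pos_iff.2 hw
    set δ : ℝ := ε / ‖w‖ with hδdef
    have hδ : 0 < δ := div_pos hε hnw
    set h : ℝ → ℝ := fun t => ∑ j ∈ Finset.range (N + 1 - m),
      (t ^ j * A (m + j) w + t ^ (j + 2) * B (m + j) w) with hh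
    have hcont : Continuous h := by
      apply continuous_finset_sum
      intro j _
      fun_prop
    have hneg : ∀ t ∈ Set.Ioo (0:ℝ) δ, h t ≤ 0 := by
      rintro t ⟨ht0, htδ⟩
      have hvn : 0 < ‖t • w‖ := by
        rw [norm_smul, Real.norm_eq_abs, abs_of_pos ht0]
        positivity
      have hvε : ‖t • w‖ < ε := by
        rw [norm_smul, Real.norm_eq_abs, abs_of_pos ht0]
        calc t * ‖w‖ < δ * ‖w‖ := by apply mul_lt_mul_of_pos_right htδ hnw
        _ = ε := by rw [hδdef]; field_simp
      have H := hLya (t • w) hvn hvε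
      rw [(hasFDerivAt_eval P (t • w)).fderiv, gradCLM_apply] at H
      have hsw1 : (t • w).1 = t * w.1 := rfl
      have hsw2 : (t • w).2 = t * w.2 := rfl
      have hfs1 : (f (t • w)).1 = t^5 * (f0 w).1 + t^7 * (f1 w).1 := by
        simp only [f, f0, f1, a, b, hsw1, hsw2, Prod.fst_add]
        ring
      have hfs2 : (f (t • w)).2 = t^5 * (f0 w).2 + t^7 * (f1 w).2 := by
        simp only [f, f0, f1, a, b, hsw1, hsw2, Prod.snd_add]
        ring
      have hkey : t ^ (m + 5) * h t
          = t * (eval ![(t • w).1, (t • w).2] (pderiv 0 P) * (f (t • w)).1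
               + eval ![(t • w).1, (t • w).2] (pderiv 1 P) * (f (t • w)).2) := by
        have hPsum : P = ∑ k ∈ Finset.range (N+1), pc k := (sum_homogeneousComponent P).symm
        have hexp0 : eval ![(t • w).1, (t • w).2] (pderiv 0 P)
            = ∑ k ∈ Finset.range (N+1), eval ![(t • w).1, (t • w).2] (pderiv 0 (pc k)) := by
          conv_lhs => rw [hPsum]
          rw [map_sum (pderiv 0), map_sum (eval _)]
        have hexp1 : eval ![(t • w).1, (t • w).2] (pderiv 1 P)
            = ∑ k ∈ Finset.range (N+1), eval ![(t • w).1, (t • w).2] (pderiv 1 (pc k)) := by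
          conv_lhs => rw [hPsum]
          rw [map_sum (pderiv 1), map_sum (eval _)]
        have hterm : ∀ k ∈ Finset.range (N+1),
            t * (eval ![(t • w).1, (t • w).2] (pderiv 0 (pc k)) * (f (t • w)).1
              + eval ![(t • w).1, (t • w).2] (pderiv 1 (pc k)) * (f (t • w)).2)
            = t^(k+5) * A k w + t^(k+7) * B k w := by
          intro k _
          have e0 := pderivScale (homogeneousComponent_isHomogeneous k P) t w 0
          have e1 := pderivScale (homogeneousComponent_isHomogeneous k P) t w 1
          rw [hfs1, hfs2]
          simp only [hsw1, hsw2, hA, hB, hpc]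
          linear_combination (t^5*(f0 w).1 + t^7*(f1 w).1) * e0
            + (t^5*(f0 w).2 + t^7*(f1 w).2) * e1
        have hsub : ∑ k ∈ Finset.range (N+1), (t^(k+5) * A k w + t^(k+7) * B k w)
            = ∑ k ∈ Finset.Ico m (N+1), (t^(k+5) * A k w + t^(k+7) * B k w) := by
          refine (Finset.sum_subset ?_ ?_).symm
          · intro k hk
            simp only [Finset.mem_Ico, Finset.mem_range] at *
            omega
          · intro k hk1 hk2
            have hkm : k < m := by
              simp only [Finset.mem_Ico, Finset.mem_range] at *
              omega
            have hz : pc k = 0 := hmin k hkm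
            simp [hA, hB, hz]
        symm
        calc t * (eval ![(t • w).1, (t • w).2] (pderiv 0 P) * (f (t • w)).1
               + eval ![(t • w).1, (t • w).2] (pderiv 1 P) * (f (t • w)).2)
            = ∑ k ∈ Finset.range (N+1),
              t * (eval ![(t • w).1, (t • w).2] (pderiv 0 (pc k)) * (f (t • w)).1
                + eval ![(t • w).1, (t • w).2] (pderiv 1 (pc k)) * (f (t • w)).2) := by
              rw [hexp0, hexp1, Finset.sum_mul, Finset.sum_mul, ← Finset.sum_add_distrib,
                Finset.mul_sum]
          _ = ∑ k ∈ Finset.range (N+1), (t^(k+5) * A k w + t^(k+7) * B k w) :=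
              Finset.sum_congr rfl hterm
          _ = ∑ k ∈ Finset.Ico m (N+1), (t^(k+5) * A k w + t^(k+7) * B k w) := hsub
          _ = ∑ j ∈ Finset.range (N+1-m), (t^((m+j)+5) * A (m+j) w + t^((m+j)+7) * B (m+j) w) :=
              Finset.sum_Ico_eq_sum_range _ _ _
          _ = t ^ (m + 5) * h t := by
              rw [hh]
              simp only
              rw [Finset.mul_sum]
              exact Finset.sum_congr rfl fun j _ => by ring
      have hpos : 0 < t ^ (m + 5) := pow_pos ht0 _
      nlinarith [mul_neg_of_pos_of_neg ht0 H, hkey]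
    have hlim : Filter.Tendsto h (nhdsWithin 0 (Set.Ioi 0)) (nhds (h 0)) :=
      (hcont.tendsto 0).mono_left nhdsWithin_le_nhds
    have hle : h 0 ≤ 0 :=
      le_of_tendsto hlim (Filter.eventually_of_mem
        (Ioo_mem_nhdsGT_of_mem ⟨le_refl (0:ℝ), hδ⟩) hneg)
    have h00 : h 0 = A m w := by
      show ∑ j ∈ Finset.range (N + 1 - m),
        ((0:ℝ) ^ j * A (m + j) w + (0:ℝ) ^ (j + 2) * B (m + j) w) = A m w
      rw [Finset.sum_eq_single 0]
      · norm_num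
      · intro j _ hj
        have : j ≠ 0 := hj
        simp [zero_pow this]
      · intro hmem
        exfalso
        apply hmem
        simp only [Finset.mem_range]
        omega
    rwa [h00] at hle
  -- The curve argument: Pm is constant on the invariant curve
  set Pm := pc m with hPm
  have hPmhom : Pm.IsHomogeneous m := homogeneousComponent_isHomogeneous m P
  set H : ℝ → ℝ := fun θ => eval ![gam1 θ, gam2 θ] Pm with hHdef
  have hHd : ∀ θ, HasDerivAt H
      ((1 + Real.cos (2*θ)^2) * A m (gam1 θ, gam2 θ)) θ := by
    intro θ
    have hγ := (gam1_hasDeriv θ).prodMk (gam2_hasDeriv θ)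
    have hcomp := (hasFDerivAt_eval Pm (gam1 θ, gam2 θ)).comp_hasDerivAt θ hγ
    refine hcomp.congr_deriv ?_
    rw [gradCLM_apply]
    simp only
    rw [key1 θ, key2 θ]
    simp only [hA]
    ring
  have hdiffH : Differentiable ℝ H := fun θ => (hHd θ).differentiableAt
  have hderivH : ∀ θ, deriv H θ ≤ 0 := by
    intro θ
    rw [(hHd θ).deriv]
    have hγne : ((gam1 θ, gam2 θ) : ℝ × ℝ) ≠ 0 := by
      intro hc
      have h1 : gam1 θ = 0 := congrArg Prod.fst hc
      have h2 : gam2 θ = 0 := congrArg Prod.snd hc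
      have hS := (sqrtQ_pos θ).ne'
      rw [gam1, div_eq_zero_iff] at h1
      rw [gam2, div_eq_zero_iff] at h2
      have hcos : Real.cos θ = 0 := by tauto
      have hsin : Real.sin θ = 0 := by tauto
      nlinarith [Real.sin_sq_add_cos_sq θ]
    have hq : (0:ℝ) < 1 + Real.cos (2*θ)^2 := by positivity
    exact mul_nonpos_of_nonneg_of_nonpos hq.le (hAm _ hγne)
  have hanti : Antitone H := antitone_of_deriv_nonpos hdiffH hderivH
  have hper : ∀ θ, H (θ + 2*Real.pi) = H θ := by
    intro θ
    have e1 : Real.cos (θ + 2*Real.pi) = Real.cos θ := Real.cos_add_two_pi θ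
    have e2 : Real.sin (θ + 2*Real.pi) = Real.sin θ := Real.sin_add_two_pi θ
    have e3 : Real.cos (2*(θ + 2*Real.pi)) = Real.cos (2*θ) := by
      have h4 : 2*(θ + 2*Real.pi) = (2*θ + 2*Real.pi) + 2*Real.pi := by ring
      rw [h4, Real.cos_add_two_pi, Real.cos_add_two_pi]
    simp only [hHdef, gam1, gam2, e1, e2, e3]
  set K := H 0 with hKdef
  have hconst : ∀ θ ∈ Set.Icc (-(2*Real.pi)) (2*Real.pi), H θ = K := by
    intro θ hθ
    have hp : H (2*Real.pi) = K := by
      have := hper 0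
      rw [zero_add] at this
      rw [this]
    have hn : H (-(2*Real.pi)) = K := by
      have := hper (-(2*Real.pi))
      rw [neg_add_cancel] at this
      rw [← this]
    have l1 : H θ ≤ K := hn ▸ hanti hθ.1
    have l2 : K ≤ H θ := hp ▸ hanti hθ.2
    linarith
  -- value of Pm on the unit circle
  have hcirc : ∀ θ ∈ Set.Icc (-(2*Real.pi)) (2*Real.pi),
      eval ![Real.cos θ, Real.sin θ] Pm
        = Real.sqrt (1 + Real.cos (2*θ)^2) ^ m * K := by
    intro θ hθ
    have hS := sqrtQ_pos θ
    have h1 : (![gam1 θ, gam2 θ] : Fin 2 → ℝ)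
        = (Real.sqrt (1 + Real.cos (2*θ)^2))⁻¹ • ![Real.cos θ, Real.sin θ] := by
      funext j
      fin_cases j <;> simp [gam1, gam2, div_eq_inv_mul]
    have h3 : K = (Real.sqrt (1 + Real.cos (2*θ)^2))⁻¹ ^ m
        * eval ![Real.cos θ, Real.sin θ] Pm := by
      rw [← hconst θ hθ, hHdef]
      simp only
      rw [h1, evalSmul hPmhom]
    rw [h3]
    field_simp
    rw [mul_assoc, ← mul_pow, mul_one_div_cancel hS.ne', one_pow, mul_one]
  -- polar coordinates
  have hpolar : ∀ x0 x1 : ℝ, ¬(x0 = 0 ∧ x1 = 0) →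
      ∃ ρ θ, 0 < ρ ∧ θ ∈ Set.Icc (-(2*Real.pi)) (2*Real.pi)
        ∧ x0 = ρ * Real.cos θ ∧ x1 = ρ * Real.sin θ := by
    intro x0 x1 hxz
    set z : ℂ := ⟨x0, x1⟩ with hz
    have hz0 : z ≠ 0 := by
      intro hc
      apply hxz
      rw [Complex.ext_iff] at hc
      exact ⟨hc.1, hc.2⟩
    refine ⟨‖z‖, Complex.arg z, ?_, ?_, ?_, ?_⟩
    · exact norm_pos_iff.mpr hz0
    · constructor
      · nlinarith [Complex.neg_pi_lt_arg z, Real.pi_pos]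
      · nlinarith [Complex.arg_le_pi z, Real.pi_pos]
    · rw [Complex.cos_arg hz0]
      field_simp [norm_ne_zero_iff.mpr hz0]
      rfl
    · rw [Complex.sin_arg]
      field_simp [norm_ne_zero_iff.mpr hz0]
      rfl
  -- the polynomial identity
  set Q1 : MvPolynomial (Fin 2) ℝ := Pm^2 * (X 0^2 + X 1^2)^m with hQ1
  set Q2 : MvPolynomial (Fin 2) ℝ
    := C (K^2) * ((X 0^2 + X 1^2)^2 + (X 0^2 - X 1^2)^2)^m with hQ2
  have hevPm : ∀ ρ θ, 0 < ρ → θ ∈ Set.Icc (-(2*Real.pi)) (2*Real.pi) →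
      eval ![ρ * Real.cos θ, ρ * Real.sin θ] Pm
        = ρ^m * (Real.sqrt (1 + Real.cos (2*θ)^2) ^ m * K) := by
    intro ρ θ hρ hθ
    have h1 : (![ρ * Real.cos θ, ρ * Real.sin θ] : Fin 2 → ℝ)
        = ρ • ![Real.cos θ, Real.sin θ] := by
      funext j; fin_cases j <;> simp
    rw [h1, evalSmul hPmhom, hcirc θ hθ]
  have hQ : Q1 = Q2 := by
    apply MvPolynomial.funext
    intro x
    have hx : x = ![x 0, x 1] := by
      funext j; fin_cases j <;> rfl
    by_cases hxz : x 0 = 0 ∧ x 1 = 0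
    · rw [hx, hxz.1, hxz.2]
      simp [hQ1, hQ2, zero_pow (by omega : m ≠ 0)]
    · obtain ⟨ρ, θ, hρ, hθ, hx0, hx1⟩ := hpolar (x 0) (x 1) hxz
      rw [hx, hx0, hx1]
      have hSθ := sqrtQ_sq θ
      have hc2 : Real.cos (2*θ) = Real.cos θ^2 - Real.sin θ^2 := Real.cos_two_mul' θ
      have hpy : Real.sin θ^2 + Real.cos θ^2 = 1 := Real.sin_sq_add_cos_sq θ
      simp only [hQ1, hQ2, map_mul, map_pow, map_add, map_sub, eval_C, eval_X,
        Matrix.cons_val_zero, Matrix.cons_val_one, Matrix.head_cons]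
      rw [hevPm ρ θ hρ hθ]
      have e1 : (ρ * Real.cos θ)^2 + (ρ * Real.sin θ)^2 = ρ^2 := by
        linear_combination ρ^2 * hpy
      have e2 : ((ρ * Real.cos θ)^2 + (ρ * Real.sin θ)^2)^2
          + ((ρ * Real.cos θ)^2 - (ρ * Real.sin θ)^2)^2
          = ρ^4 * (Real.sqrt (1 + Real.cos (2*θ)^2))^2 := by
        rw [hSθ, hc2]
        linear_combination (ρ^4*(Real.sin θ^2 + Real.cos θ^2 + 1)) * hpy
      rw [e2, e1]
      ring
  -- push to ℂ to conclude K = 0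
  have hK0 : K = 0 := by
    have hc := congrArg (aeval (![1, Complex.I] : Fin 2 → ℂ)) hQ
    simp only [hQ1, hQ2, map_mul, map_pow, map_add, map_sub, aeval_X, aeval_C,
      Matrix.cons_val_zero, Matrix.cons_val_one, Matrix.head_cons] at hc
    rw [Complex.I_sq] at hc
    norm_num [zero_pow (by omega : m ≠ 0)] at hc
    exact hc
  -- conclude Pm = 0, contradiction
  apply hpm
  have : Pm = 0 := by
    apply MvPolynomial.funext
    intro x
    rw [map_zero]
    have hx : x = ![x 0, x 1] := by
      funext j; fin_cases j <;> rfl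
    by_cases hxz : x 0 = 0 ∧ x 1 = 0
    · have h0 : (![x 0, x 1] : Fin 2 → ℝ) = (0:ℝ) • ![x 0, x 1] := by
        funext j; fin_cases j <;> simp [hxz.1, hxz.2]
      rw [hx, h0, evalSmul hPmhom]
      rw [zero_pow (by omega : m ≠ 0), zero_mul]
    · obtain ⟨ρ, θ, hρ, hθ, hx0, hx1⟩ := hpolar (x 0) (x 1) hxz
      rw [hx, hx0, hx1, hevPm ρ θ hρ hθ, hK0]
      ring
  exact this
end

section
/- Let q: ℝ² → ℝ be a nonzero polynomial function, write q = Σ_j q_j where each q_j is the homogeneous component of q of degree j, and let j₀ be the smallest degree j for which q_j is not identically zero. If there exists ε > 0 such that q(v) ≤ 0 for all v ∈ ℝ² with ‖v‖ < ε, then q_{j₀}(v) ≤ 0 for all v ∈ ℝ². -/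
open MvPolynomial Finset

lemma eval_scale {σ : Type*} (φ : MvPolynomial σ ℝ) {n : ℕ} (hφ : φ.IsHomogeneous n)
    (t : ℝ) (x : σ → ℝ) :
    MvPolynomial.eval (fun i => t * x i) φ = t ^ n * MvPolynomial.eval x φ := by
  rw [eval_eq, eval_eq, Finset.mul_sum]
  apply Finset.sum_congr rfl
  intro d hd
  rw [MvPolynomial.mem_support_iff] at hd
  have hdeg : d.degree = n := by
    have := hφ hd
    rwa [Finsupp.degree_eq_weight_one]
  simp_rw [mul_pow]
  rw [Finset.prod_mul_distrib, Finset.prod_pow_eq_pow_sum]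
  have : ∑ i ∈ d.support, d i = n := by
    rw [← hdeg]; rfl
  rw [this]; ring

/-- If a nonzero polynomial `q` in two real variables is nonpositive on a
neighborhood of the origin, then its lowest-degree nonvanishing homogeneous
component `q_{j₀}` is nonpositive on all of `ℝ²`. -/
theorem stmt10 (q : MvPolynomial (Fin 2) ℝ) (hq : q ≠ 0) (j₀ : ℕ)
    (hj₀ : MvPolynomial.homogeneousComponent j₀ q ≠ 0)
    (hmin : ∀ j : ℕ, j < j₀ → MvPolynomial.homogeneousComponent j q = 0)
    (hle : ∃ ε : ℝ, ε > 0 ∧ ∀ v : ℝ × ℝ, ‖v‖ < ε →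
      MvPolynomial.eval ![v.1, v.2] q ≤ 0) :
    ∀ v : ℝ × ℝ, MvPolynomial.eval ![v.1, v.2] (MvPolynomial.homogeneousComponent j₀ q) ≤ 0 := by
  intro v
  obtain ⟨ε, hε, hneg⟩ := hle
  set N := q.totalDegree with hN
  -- j₀ ≤ N
  have hj₀N : j₀ ≤ N := by
    by_contra h
    exact hj₀ (MvPolynomial.homogeneousComponent_eq_zero _ q (lt_of_not_ge h))
  set c : ℕ → ℝ := fun j => MvPolynomial.eval ![v.1, v.2] (MvPolynomial.homogeneousComponent j q)
    with hc
  set g : ℝ → ℝ := fun t => ∑ j ∈ Finset.range (N + 1 - j₀), c (j₀ + j) * t ^ j with hg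
  have hgcont : Continuous g := by
    apply continuous_finset_sum
    intro j _
    exact (continuous_const.mul (continuous_pow j))
  have hg0 : g 0 = c j₀ := by
    show (∑ j ∈ Finset.range (N + 1 - j₀), c (j₀ + j) * (0:ℝ) ^ j) = c j₀
    rw [Finset.sum_eq_single 0]
    · simp
    · intro b _ hb; simp [zero_pow hb]
    · intro h
      exfalso
      apply h
      simp [Nat.sub_pos_of_lt (Nat.lt_succ_of_le hj₀N)]
  -- key identity
  have key : ∀ t : ℝ, MvPolynomial.eval ![t * v.1, t * v.2] q = t ^ j₀ * g t := by
    intro t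
    have hx : ![t * v.1, t * v.2] = fun i => t * (![v.1, v.2]) i := by
      funext i; fin_cases i <;> simp
    conv_lhs => rw [← MvPolynomial.sum_homogeneousComponent q, map_sum]
    rw [hx]
    have : ∀ j ∈ Finset.range (N + 1),
        MvPolynomial.eval (fun i => t * (![v.1, v.2]) i)
          (MvPolynomial.homogeneousComponent j q) = t ^ j * c j := by
      intro j _
      exact eval_scale _ (MvPolynomial.homogeneousComponent_isHomogeneous j q) t _
    rw [Finset.sum_congr rfl this]
    -- drop the terms below j₀
    have hzero : ∀ j ∈ Finset.range j₀, t ^ j * c j = 0 := by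
      intro j hj
      rw [Finset.mem_range] at hj
      simp [hc, hmin j hj]
    rw [Finset.range_eq_Ico, ← Finset.sum_Ico_consecutive _ (Nat.zero_le j₀)
      (Nat.le_succ_of_le hj₀N)]
    rw [← Finset.range_eq_Ico]
    rw [Finset.sum_eq_zero hzero, zero_add]
    rw [Finset.sum_Ico_eq_sum_range]
    rw [hg, Finset.mul_sum]
    apply Finset.sum_congr rfl
    intro j _
    rw [pow_add]; ring
  -- g t ≤ 0 for small positive t
  set δ : ℝ := ε / (‖v‖ + 1) with hδ
  have hδpos : 0 < δ := div_pos hε (by positivity)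
  have hgle : ∀ t ∈ Set.Ioo (0 : ℝ) δ, g t ≤ 0 := by
    intro t ⟨ht0, htδ⟩
    have hnorm : ‖(t * v.1, t * v.2)‖ < ε := by
      have : (t * v.1, t * v.2) = t • v := by simp [Prod.smul_def, smul_eq_mul]
      rw [this, norm_smul, Real.norm_eq_abs, abs_of_pos ht0]
      calc t * ‖v‖ ≤ t * (‖v‖ + 1) := by nlinarith [norm_nonneg v]
        _ < δ * (‖v‖ + 1) := by nlinarith [norm_nonneg v]
        _ = ε := by rw [hδ, div_mul_cancel₀]; positivity
    have := hneg (t * v.1, t * v.2) hnorm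
    rw [show ((t * v.1, t * v.2) : ℝ × ℝ).1 = t * v.1 from rfl] at this
    have hkey := key t
    rw [hkey] at this
    have htj : 0 < t ^ j₀ := pow_pos ht0 j₀
    nlinarith [htj]
  -- pass to the limit t → 0⁺
  have htend : Filter.Tendsto g (nhdsWithin 0 (Set.Ioi 0)) (nhds (g 0)) :=
    (hgcont.tendsto 0).mono_left nhdsWithin_le_nhds
  have : g 0 ≤ 0 := by
    apply le_of_tendsto htend
    filter_upwards [Ioo_mem_nhdsGT_of_mem ⟨le_refl (0:ℝ), hδpos⟩] with t ht
    exact hgle t ht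
  rw [hg0] at this
  exact this
end

section
/- W is constant along trajectories of f₀: if γ: ℝ → ℝ² is a differentiable curve satisfying γ'(t) = f₀(γ(t)) for all t ∈ ℝ, then W(γ(t)) = W(γ(0)) for all t ∈ ℝ. In particular, if γ(0) ∈ M then γ(t) ∈ M for all t ∈ ℝ, i.e., M is invariant under the flow of f₀. -/
/-- The `1`-level set of `W`. -/
def M : Set (ℝ × ℝ) := {p : ℝ × ℝ | W p = 1}

lemma W_eq (p : ℝ × ℝ) : W p = (p.1 ^ 4 + p.2 ^ 4) / (p.1 ^ 2 + p.2 ^ 2) := by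
  unfold W
  rcases eq_or_ne p 0 with h | h
  · subst h; simp
  · rw [if_neg h]

lemma W_fderiv_zero : HasFDerivAt W (0 : ℝ × ℝ →L[ℝ] ℝ) 0 := by
  rw [hasFDerivAt_iff_isLittleO_nhds_zero]
  simp only [zero_add, ContinuousLinearMap.zero_apply, sub_zero]
  rw [Asymptotics.isLittleO_iff]
  intro c hc
  have : ∀ᶠ p : ℝ × ℝ in nhds 0, ‖p‖ < c / 2 := by
    have := Metric.ball_mem_nhds (0 : ℝ × ℝ) (half_pos hc)
    filter_upwards [this] with p hp
    simpa [dist_eq_norm] using hp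
  filter_upwards [this] with p hp
  have hW0' : W 0 = 0 := by simp [W]
  rw [hW0', sub_zero]
  have hW : ‖W p‖ ≤ 2 * ‖p‖ ^ 2 := by
    rw [W_eq]
    have h1 : |p.1| ≤ ‖p‖ := by simpa using norm_fst_le p
    have h2 : |p.2| ≤ ‖p‖ := by simpa using norm_snd_le p
    have hx2 : p.1 ^ 2 ≤ ‖p‖ ^ 2 := by
      calc p.1 ^ 2 = |p.1| ^ 2 := by rw [sq_abs]
        _ ≤ ‖p‖ ^ 2 := by gcongr
    have hy2 : p.2 ^ 2 ≤ ‖p‖ ^ 2 := by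
      calc p.2 ^ 2 = |p.2| ^ 2 := by rw [sq_abs]
        _ ≤ ‖p‖ ^ 2 := by gcongr
    rcases eq_or_ne (p.1 ^ 2 + p.2 ^ 2) 0 with hD | hD
    · simp [hD]
    · have hDpos : 0 < p.1 ^ 2 + p.2 ^ 2 := lt_of_le_of_ne (by positivity) (Ne.symm hD)
      have hnum : p.1 ^ 4 + p.2 ^ 4 ≤ (p.1 ^ 2 + p.2 ^ 2) ^ 2 := by nlinarith [sq_nonneg (p.1 * p.2)]
      have hWle : (p.1 ^ 4 + p.2 ^ 4) / (p.1 ^ 2 + p.2 ^ 2) ≤ p.1 ^ 2 + p.2 ^ 2 := by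
        rw [div_le_iff₀ hDpos]; nlinarith
      have hW0 : 0 ≤ (p.1 ^ 4 + p.2 ^ 4) / (p.1 ^ 2 + p.2 ^ 2) := by positivity
      rw [Real.norm_eq_abs, abs_of_nonneg hW0]
      calc (p.1 ^ 4 + p.2 ^ 4) / (p.1 ^ 2 + p.2 ^ 2) ≤ p.1 ^ 2 + p.2 ^ 2 := hWle
        _ ≤ 2 * ‖p‖ ^ 2 := by linarith
  calc ‖W p‖ ≤ 2 * ‖p‖ ^ 2 := hW
    _ = (2 * ‖p‖) * ‖p‖ := by ring
    _ ≤ c * ‖p‖ := by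
        gcongr
        linarith

lemma key_s12 (γ : ℝ → ℝ × ℝ) (h : ∀ t : ℝ, HasDerivAt γ (f0 (γ t)) t) (t : ℝ) :
    HasDerivAt (fun s => W (γ s)) 0 t := by
  by_cases hp : γ t = 0
  · have h0 : HasDerivAt γ 0 t := by
      have : f0 (γ t) = 0 := by simp [hp, f0, a, b]
      simpa [this] using h t
    have hWF : HasFDerivAt W (0 : ℝ × ℝ →L[ℝ] ℝ) (γ t) := by rw [hp]; exact W_fderiv_zero
    have := hWF.comp_hasDerivAt t h0
    exact this.congr_deriv (by simp)
  · set x := (γ t).1 with hxdef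
    set y := (γ t).2 with hydef
    have hx : HasDerivAt (fun s => (γ s).1) (f0 (γ t)).1 t := (h t).fst
    have hy : HasDerivAt (fun s => (γ s).2) (f0 (γ t)).2 t := (h t).snd
    have hvx : (f0 (γ t)).1 = -b x y := rfl
    have hvy : (f0 (γ t)).2 = a x y := rfl
    rw [hvx] at hx
    rw [hvy] at hy
    have hN : HasDerivAt (fun s => (γ s).1 ^ 4 + (γ s).2 ^ 4)
        (4 * x ^ 3 * (-b x y) + 4 * y ^ 3 * (a x y)) t := by
      have := ((hx.pow 4).add (hy.pow 4))
      exact this.congr_deriv (by rw [hxdef, hydef]; norm_num)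
    have hD : HasDerivAt (fun s => (γ s).1 ^ 2 + (γ s).2 ^ 2)
        (2 * x * (-b x y) + 2 * y * (a x y)) t := by
      have := ((hx.pow 2).add (hy.pow 2))
      exact this.congr_deriv (by rw [hxdef, hydef]; norm_num)
    have hDne : x ^ 2 + y ^ 2 ≠ 0 := by
      intro hzero
      apply hp
      have hx0 : x = 0 := by nlinarith [sq_nonneg x, sq_nonneg y]
      have hy0 : y = 0 := by nlinarith [sq_nonneg x, sq_nonneg y]
      exact Prod.ext hx0 hy0
    have hdiv := hN.div hD hDne
    have heq : (fun s => W (γ s)) = fun s => ((γ s).1 ^ 4 + (γ s).2 ^ 4) / ((γ s).1 ^ 2 + (γ s).2 ^ 2) := by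
      funext s; exact W_eq (γ s)
    rw [heq]
    refine hdiv.congr_deriv (Eq.symm ?_)
    rw [eq_comm, div_eq_zero_iff]
    left
    simp only [a, b]
    ring

/-- `W` is constant along trajectories of `f₀`; in particular `M` is invariant
under the flow of `f₀`. -/
theorem stmt12 :
    ∀ γ : ℝ → ℝ × ℝ, (∀ t : ℝ, HasDerivAt γ (f0 (γ t)) t) →
      (∀ t : ℝ, W (γ t) = W (γ 0)) ∧ (γ 0 ∈ M → ∀ t : ℝ, γ t ∈ M) := by
  intro γ h
  have hconst : ∀ t : ℝ, W (γ t) = W (γ 0) := by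
    intro t
    exact is_const_of_deriv_eq_zero (fun s => (key_s12 γ h s).differentiableAt)
      (fun s => (key_s12 γ h s).deriv) t 0
  exact ⟨hconst, fun h0 t => by simpa [M, hconst t] using h0⟩
end

section
/- The set M is a periodic orbit of the vector field f₀: there exist a real number T > 0 and a differentiable curve γ: ℝ → ℝ² such that γ'(t) = f₀(γ(t)) for all t ∈ ℝ, γ(t + T) = γ(t) for all t ∈ ℝ, and the image γ(ℝ) equals M. -/
open Real Filter

/-! ### Auxiliary definitions for the periodic orbit -/

noncomputable def ww (θ : ℝ) : ℝ := Real.cos θ ^ 4 + Real.sin θ ^ 4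

lemma ww_pos (θ : ℝ) : 0 < ww θ := by
  have h := Real.sin_sq_add_cos_sq θ
  unfold ww
  nlinarith [sq_nonneg (Real.sin θ ^ 2 - Real.cos θ ^ 2)]

noncomputable def gg (θ : ℝ) : ℝ := 3 * θ / 8 + Real.sin (4 * θ) / 32

lemma hasDerivAt_gg (θ : ℝ) : HasDerivAt gg (ww θ / 2) θ := by
  have h1 : HasDerivAt (fun x : ℝ => 3 * x / 8) (3 / 8) θ := by
    simpa using ((hasDerivAt_id θ).const_mul 3).div_const 8
  have h2 : HasDerivAt (fun x : ℝ => Real.sin (4 * x)) (Real.cos (4 * θ) * 4) θ :=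
    (Real.hasDerivAt_sin (4 * θ)).comp θ (by simpa using (hasDerivAt_id θ).const_mul 4)
  have h := h1.add (h2.div_const 32)
  have hc : Real.cos (4 * θ) = 2 * (2 * Real.cos θ ^ 2 - 1) ^ 2 - 1 := by
    rw [show (4 : ℝ) * θ = 2 * (2 * θ) by ring, Real.cos_two_mul, Real.cos_two_mul]
  have heq : 3 / 8 + Real.cos (4 * θ) * 4 / 32 = ww θ / 2 := by
    unfold ww
    rw [hc]
    have hs := Real.sin_sq_add_cos_sq θ
    nlinarith [hs]
  rw [← heq]
  exact h

lemma gg_strictMono : StrictMono gg :=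
  strictMono_of_deriv_pos (fun x => by
    rw [(hasDerivAt_gg x).deriv]; exact half_pos (ww_pos x))

lemma gg_surjective : Function.Surjective gg := by
  have hcont : Continuous gg := by
    have := fun x => (hasDerivAt_gg x).differentiableAt
    exact (Differentiable.continuous this)
  apply hcont.surjective
  · apply tendsto_atTop_mono (f := fun θ : ℝ => 3 / 8 * θ - 1 / 32)
    · intro θ
      have := Real.neg_one_le_sin (4 * θ)
      unfold gg; linarith
    · exact tendsto_atTop_add_const_right _ _ (Tendsto.const_mul_atTop (by norm_num) tendsto_id)
  · apply tendsto_atBot_mono (f := fun θ : ℝ => 3 / 8 * θ + 1 / 32)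
    · intro θ
      have := Real.sin_le_one (4 * θ)
      unfold gg; linarith
    · exact tendsto_atBot_add_const_right _ _ (Tendsto.const_mul_atBot (by norm_num) tendsto_id)

noncomputable def ee : ℝ ≃o ℝ := StrictMono.orderIsoOfSurjective gg gg_strictMono gg_surjective

noncomputable def tau (t : ℝ) : ℝ := ee.symm t

lemma gg_tau (t : ℝ) : gg (tau t) = t :=
  StrictMono.orderIsoOfSurjective_self_symm_apply gg gg_strictMono gg_surjective t

lemma tau_gg (θ : ℝ) : tau (gg θ) = θ :=
  StrictMono.orderIsoOfSurjective_symm_apply_self gg gg_strictMono gg_surjective θ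

lemma tau_surjective : Function.Surjective tau := fun θ => ⟨gg θ, tau_gg θ⟩

lemma hasDerivAt_tau (t : ℝ) : HasDerivAt tau (ww (tau t) / 2)⁻¹ t := by
  apply HasDerivAt.of_local_left_inverse (f := gg)
  · exact (ee.symm.continuous.continuousAt : ContinuousAt tau t)
  · exact hasDerivAt_gg (tau t)
  · exact (half_pos (ww_pos _)).ne'
  · exact Filter.Eventually.of_forall gg_tau

noncomputable def cc (θ : ℝ) : ℝ × ℝ :=
  (Real.cos θ / Real.sqrt (ww θ), Real.sin θ / Real.sqrt (ww θ))

lemma hasDerivAt_ww (θ : ℝ) :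
    HasDerivAt ww (4 * Real.cos θ ^ 3 * (-Real.sin θ) + 4 * Real.sin θ ^ 3 * Real.cos θ) θ := by
  have h1 := ((Real.hasDerivAt_cos θ).pow 4)
  have h2 := ((Real.hasDerivAt_sin θ).pow 4)
  have := h1.add h2
  unfold ww
  have h3 := this.congr_deriv (show _ = 4 * Real.cos θ ^ 3 * (-Real.sin θ) + 4 * Real.sin θ ^ 3 * Real.cos θ by norm_num)
  exact h3.congr_of_eventuallyEq (Filter.Eventually.of_forall fun x => by simp)

lemma hasDerivAt_cc (θ : ℝ) : HasDerivAt cc ((ww θ / 2) • f0 (cc θ)) θ := by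
  set s := Real.sin θ with hs
  set c := Real.cos θ with hc
  set q := Real.sqrt (ww θ) with hqdef
  have hwpos := ww_pos θ
  have hq : 0 < q := Real.sqrt_pos.mpr hwpos
  have hq2 : q ^ 2 = ww θ := Real.sq_sqrt hwpos.le
  have hqne : q ≠ 0 := hq.ne'
  have hw' : HasDerivAt ww (4 * c ^ 3 * (-s) + 4 * s ^ 3 * c) θ := hasDerivAt_ww θ
  have hsq : HasDerivAt (fun x => Real.sqrt (ww x))
      ((4 * c ^ 3 * (-s) + 4 * s ^ 3 * c) / (2 * q)) θ :=
    hw'.sqrt hwpos.ne'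
  have h1 : HasDerivAt (fun x => Real.cos x / Real.sqrt (ww x))
      ((-s * q - c * ((4 * c ^ 3 * (-s) + 4 * s ^ 3 * c) / (2 * q))) / q ^ 2) θ :=
    (Real.hasDerivAt_cos θ).div hsq hqne
  have h2 : HasDerivAt (fun x => Real.sin x / Real.sqrt (ww x))
      ((c * q - s * ((4 * c ^ 3 * (-s) + 4 * s ^ 3 * c) / (2 * q))) / q ^ 2) θ :=
    (Real.hasDerivAt_sin θ).div hsq hqne
  have hD := h1.prodMk h2
  have e1 : (-s * q - c * ((4 * c ^ 3 * (-s) + 4 * s ^ 3 * c) / (2 * q))) / q ^ 2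
      = (ww θ / 2) * (-(b (c / q) (s / q))) := by
    have hq2' : q ^ 2 = c ^ 4 + s ^ 4 := hq2
    unfold b
    rw [← hq2]
    field_simp
    linear_combination (-2 * s) * hq2'
  have e2 : (c * q - s * ((4 * c ^ 3 * (-s) + 4 * s ^ 3 * c) / (2 * q))) / q ^ 2
      = (ww θ / 2) * (a (c / q) (s / q)) := by
    have hq2' : q ^ 2 = c ^ 4 + s ^ 4 := hq2
    unfold a
    rw [← hq2]
    field_simp
    linear_combination (2 * c) * hq2'
  have hsmul : (ww θ / 2) • f0 (cc θ)
      = ((ww θ / 2) * (-(b (c / q) (s / q))), (ww θ / 2) * (a (c / q) (s / q))) := rfl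
  rw [hsmul, ← e1, ← e2]
  exact hD

lemma ww_periodic (θ : ℝ) : ww (θ + 2 * Real.pi) = ww θ := by
  unfold ww
  rw [Real.cos_add_two_pi, Real.sin_add_two_pi]

lemma cc_periodic (θ : ℝ) : cc (θ + 2 * Real.pi) = cc θ := by
  unfold cc
  rw [Real.cos_add_two_pi, Real.sin_add_two_pi, ww_periodic]

lemma gg_add (θ : ℝ) : gg (θ + 2 * Real.pi) = gg θ + 3 * Real.pi / 4 := by
  unfold gg
  have hp : Real.sin (4 * (θ + 2 * Real.pi)) = Real.sin (4 * θ) := by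
    have h := (Real.sin_periodic.nat_mul 4) (4 * θ)
    rw [show 4 * (θ + 2 * Real.pi) = 4 * θ + (4 : ℕ) * (2 * Real.pi) by push_cast; ring]
    exact h
  rw [hp]
  ring

lemma cc_mem_M (θ : ℝ) : cc θ ∈ M := by
  set s := Real.sin θ with hs
  set c := Real.cos θ with hc
  set q := Real.sqrt (ww θ) with hqdef
  have hwpos := ww_pos θ
  have hq : 0 < q := Real.sqrt_pos.mpr hwpos
  have hq2 : q ^ 2 = c ^ 4 + s ^ 4 := Real.sq_sqrt hwpos.le
  have hqne : q ≠ 0 := hq.ne'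
  have hP : s ^ 2 + c ^ 2 = 1 := Real.sin_sq_add_cos_sq θ
  have hne : cc θ ≠ 0 := by
    intro h
    have h1 : c / q = 0 := congrArg Prod.fst h
    have h2 : s / q = 0 := congrArg Prod.snd h
    have hc0 : c = 0 := by field_simp at h1; simpa using h1
    have hs0 : s = 0 := by field_simp at h2; simpa using h2
    rw [hc0, hs0] at hP; norm_num at hP
  show W (cc θ) = 1
  rw [W, if_neg hne]
  show ((c / q) ^ 4 + (s / q) ^ 4) / ((c / q) ^ 2 + (s / q) ^ 2) = 1
  have hd : (c / q) ^ 2 + (s / q) ^ 2 ≠ 0 := by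
    have : (c / q) ^ 2 + (s / q) ^ 2 = 1 / q ^ 2 := by
      field_simp
      linarith
    rw [this]
    positivity
  rw [div_eq_one_iff_eq hd]
  field_simp
  linear_combination (-q ^ 2) * hP - hq2

lemma M_sub_range_cc : M ⊆ Set.range cc := by
  rintro ⟨x, y⟩ hp
  have hW : W (x, y) = 1 := hp
  have hne : ((x, y) : ℝ × ℝ) ≠ 0 := by
    intro h
    rw [h] at hW
    simp [W] at hW
  have hxy : x ^ 2 + y ^ 2 > 0 := by
    have : x ≠ 0 ∨ y ≠ 0 := by
      by_contra hcon
      push_neg at hcon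
      exact hne (by simp [Prod.ext_iff, hcon.1, hcon.2])
    rcases this with h | h
    · positivity
    · positivity
  have hWval : (x ^ 4 + y ^ 4) / (x ^ 2 + y ^ 2) = 1 := by
    rw [W, if_neg hne] at hW; exact hW
  have hsum : x ^ 4 + y ^ 4 = x ^ 2 + y ^ 2 := by
    rw [div_eq_one_iff_eq hxy.ne'] at hWval; exact hWval
  set z : ℂ := ⟨x, y⟩ with hz
  have hzne : z ≠ 0 := by
    intro h
    apply hne
    rw [Complex.ext_iff] at h
    simp [hz] at h
    simp [Prod.ext_iff, h.1, h.2]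
  set r := ‖z‖ with hr
  have hrpos : 0 < r := norm_pos_iff.mpr hzne
  have hr2 : r ^ 2 = x ^ 2 + y ^ 2 := by
    rw [hr, Complex.sq_norm, Complex.normSq_mk]; ring
  set θ := Complex.arg z with hθ
  have hcos : Real.cos θ = x / r := by rw [hθ, Complex.cos_arg hzne]
  have hsin : Real.sin θ = y / r := by rw [hθ, Complex.sin_arg]
  refine ⟨θ, ?_⟩
  have hwθ : ww θ = 1 / r ^ 2 := by
    unfold ww
    rw [hcos, hsin]
    rw [div_pow, div_pow, ← add_div]
    rw [show r ^ 4 = (r ^ 2) ^ 2 by ring, hr2]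
    rw [hsum]
    rw [← hr2]
    field_simp
  have hsqw : Real.sqrt (ww θ) = 1 / r := by
    rw [hwθ, one_div, Real.sqrt_inv, Real.sqrt_sq hrpos.le, one_div]
  show cc θ = (x, y)
  unfold cc
  rw [hcos, hsin, hsqw]
  have hrne : r ≠ 0 := hrpos.ne'
  field_simp

/-- `M` is a periodic orbit of `f₀`. -/
theorem stmt13 :
    ∃ (T : ℝ) (γ : ℝ → ℝ × ℝ), T > 0 ∧
      (∀ t : ℝ, HasDerivAt γ (f0 (γ t)) t) ∧
      (∀ t : ℝ, γ (t + T) = γ t) ∧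
      Set.range γ = M := by
  refine ⟨3 * Real.pi / 4, cc ∘ tau, by positivity, ?_, ?_, ?_⟩
  · intro t
    have h := (hasDerivAt_cc (tau t)).scomp t (hasDerivAt_tau t)
    have hne : ww (tau t) / 2 ≠ 0 := (half_pos (ww_pos _)).ne'
    have : (ww (tau t) / 2)⁻¹ • ((ww (tau t) / 2) • f0 (cc (tau t))) = f0 (cc (tau t)) := by
      rw [smul_smul, inv_mul_cancel₀ hne, one_smul]
    rw [this] at h
    exact h
  · intro t
    have h1 : tau (t + 3 * Real.pi / 4) = tau t + 2 * Real.pi := by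
      apply gg_strictMono.injective
      rw [gg_tau, gg_add, gg_tau]
    show cc (tau (t + 3 * Real.pi / 4)) = cc (tau t)
    rw [h1, cc_periodic]
  · rw [Set.range_comp, tau_surjective.range_eq, Set.image_univ]
    apply Set.Subset.antisymm
    · rintro p ⟨θ, rfl⟩
      exact cc_mem_M θ
    · exact M_sub_range_cc
end

section
/- If p ∈ ℝ[x,y] is a homogeneous polynomial of degree k ≥ 1 and satisfies ⟨∇p(x,y), f₀(x,y)⟩ ≤ 0 for all (x,y) ∈ ℝ², then p is the zero polynomial. -/
open MvPolynomial

noncomputable def Sq (θ : ℝ) : ℝ := Real.sqrt (2 - Real.sin (2*θ)^2)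
noncomputable def γ (θ : ℝ) : ℝ × ℝ := ((Sq θ)⁻¹ * Real.cos θ, (Sq θ)⁻¹ * Real.sin θ)
lemma w_pos (θ : ℝ) : 0 < 2 - Real.sin (2*θ)^2 := by nlinarith [Real.sin_sq_le_one (2*θ)]
lemma Sq_pos (θ : ℝ) : 0 < Sq θ := Real.sqrt_pos.mpr (w_pos θ)
lemma Sq_sq (θ : ℝ) : Sq θ ^ 2 = 2 - Real.sin (2*θ)^2 := Real.sq_sqrt (w_pos θ).le

lemma γ_periodic : Function.Periodic γ (2*Real.pi) := by
  intro θ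
  have h3 : Real.sin (2*(θ + 2*Real.pi)) = Real.sin (2*θ) := by
    rw [show 2*(θ + 2*Real.pi) = 2*θ + 2*Real.pi + 2*Real.pi by ring,
      Real.sin_add_two_pi, Real.sin_add_two_pi]
  simp only [γ, Sq, h3, Real.cos_add_two_pi, Real.sin_add_two_pi]

lemma eval_smul_hom {k : ℕ} {p : MvPolynomial (Fin 2) ℝ} (hp : p.IsHomogeneous k)
    (r : ℝ) (v : Fin 2 → ℝ) : eval (fun i => r * v i) p = r ^ k * eval v p := by
  rw [eval_eq, eval_eq, Finset.mul_sum]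
  apply Finset.sum_congr rfl
  intro d hd
  have hdeg : ∑ i ∈ d.support, d i = k := by
    have := hp (MvPolynomial.mem_support_iff.mp hd)
    simpa [Finsupp.weight, Finsupp.degree, Finsupp.linearCombination, Finsupp.sum] using this
  calc coeff d p * ∏ i ∈ d.support, (r * v i) ^ d i
      = coeff d p * ((∏ i ∈ d.support, r ^ d i) * ∏ i ∈ d.support, v i ^ d i) := by
        rw [← Finset.prod_mul_distrib]; simp [mul_pow]
    _ = r ^ k * (coeff d p * ∏ i ∈ d.support, v i ^ d i) := by
        rw [Finset.prod_pow_eq_pow_sum, hdeg]; ring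

lemma diffF (p : MvPolynomial (Fin 2) ℝ) :
    Differentiable ℝ (fun w : ℝ × ℝ => eval ![w.1, w.2] p) := by
  induction p using MvPolynomial.induction_on with
  | C a => simpa using differentiable_const a
  | add p q hp hq => simp only [map_add]; exact hp.add hq
  | mul_X p i hp =>
      simp only [eval_mul, eval_X]
      exact hp.mul (by fin_cases i <;> simp [differentiable_fst, differentiable_snd])

lemma hasDerivAt_γ (θ : ℝ) :
    HasDerivAt γ ((2 - Real.sin (2*θ)^2) • f0 (γ θ)) θ := by
  have h2θ : HasDerivAt (fun t : ℝ => 2*t) 2 θ := by simpa using (hasDerivAt_id θ).const_mul 2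
  have hsin : HasDerivAt (fun t => Real.sin (2*t)) (Real.cos (2*θ) * 2) θ :=
    (Real.hasDerivAt_sin (2*θ)).comp θ h2θ
  have hw : HasDerivAt (fun t => 2 - Real.sin (2*t)^2)
      (-((2:ℕ) * Real.sin (2*θ) ^ 1 * (Real.cos (2*θ) * 2))) θ := (hsin.pow 2).const_sub 2
  have hS : HasDerivAt Sq
      ((-((2:ℕ) * Real.sin (2*θ) ^ 1 * (Real.cos (2*θ) * 2))) / (2 * Sq θ)) θ :=
    hw.sqrt (w_pos θ).ne'
  have hR : HasDerivAt (fun t => (Sq t)⁻¹)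
      (-((-((2:ℕ) * Real.sin (2*θ) ^ 1 * (Real.cos (2*θ) * 2))) / (2 * Sq θ)) / (Sq θ)^2) θ :=
    hS.inv (Sq_pos θ).ne'
  have hS0 : Sq θ ≠ 0 := (Sq_pos θ).ne'
  have hR'eq : -((-((2:ℕ) * Real.sin (2*θ) ^ 1 * (Real.cos (2*θ) * 2))) / (2 * Sq θ)) / (Sq θ)^2
      = (2 * Real.sin (2*θ) * Real.cos (2*θ)) * ((Sq θ)^3)⁻¹ := by
    field_simp
    ring
  rw [hR'eq] at hR
  have h1 : HasDerivAt (fun t => (Sq t)⁻¹ * Real.cos t)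
      ((2 * Real.sin (2*θ) * Real.cos (2*θ)) * ((Sq θ)^3)⁻¹ * Real.cos θ
        + (Sq θ)⁻¹ * (-Real.sin θ)) θ := hR.mul (Real.hasDerivAt_cos θ)
  have h2 : HasDerivAt (fun t => (Sq t)⁻¹ * Real.sin t)
      ((2 * Real.sin (2*θ) * Real.cos (2*θ)) * ((Sq θ)^3)⁻¹ * Real.sin θ
        + (Sq θ)⁻¹ * (Real.cos θ)) θ := hR.mul (Real.hasDerivAt_sin θ)
  have h := h1.prodMk h2
  convert h using 1
  · rfl
  have hS2 := Sq_sq θ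
  have hpyth := Real.sin_sq_add_cos_sq θ
  rw [← hS2]
  have hb : b ((Sq θ)⁻¹ * Real.cos θ) ((Sq θ)⁻¹ * Real.sin θ)
      = ((Sq θ)^5)⁻¹ * b (Real.cos θ) (Real.sin θ) := by
    simp only [b, mul_pow]; field_simp
  have ha : a ((Sq θ)⁻¹ * Real.cos θ) ((Sq θ)⁻¹ * Real.sin θ)
      = ((Sq θ)^5)⁻¹ * a (Real.cos θ) (Real.sin θ) := by
    simp only [a, mul_pow]; field_simp
  have key1 : -(b (Real.cos θ) (Real.sin θ))
      = 2 * Real.sin (2*θ) * Real.cos (2*θ) * Real.cos θ - Real.sin θ * Sq θ ^ 2 := by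
    rw [hS2, Real.sin_two_mul, Real.cos_two_mul]
    simp only [b]
    linear_combination (-2*Real.sin θ^3 - 6 * Real.sin θ * Real.cos θ^2 - 2*Real.sin θ) * hpyth
  have key2 : a (Real.cos θ) (Real.sin θ)
      = 2 * Real.sin (2*θ) * Real.cos (2*θ) * Real.sin θ + Real.cos θ * Sq θ ^ 2 := by
    rw [hS2, Real.sin_two_mul, Real.cos_two_mul]
    simp only [a]
    linear_combination (2*Real.cos θ^3 + 2 * Real.cos θ - 2*Real.cos θ*Real.sin θ^2) * hpyth
  refine Prod.ext ?_ ?_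
  · show Sq θ ^ 2 * (-b ((Sq θ)⁻¹ * Real.cos θ) ((Sq θ)⁻¹ * Real.sin θ)) = _
    rw [hb]
    rw [show Sq θ ^ 2 * -(((Sq θ)^5)⁻¹ * b (Real.cos θ) (Real.sin θ))
        = -(b (Real.cos θ) (Real.sin θ)) * ((Sq θ)^3)⁻¹ by field_simp, key1]
    field_simp
    ring
  · show Sq θ ^ 2 * (a ((Sq θ)⁻¹ * Real.cos θ) ((Sq θ)⁻¹ * Real.sin θ)) = _
    rw [ha]
    rw [show Sq θ ^ 2 * (((Sq θ)^5)⁻¹ * a (Real.cos θ) (Real.sin θ))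
        = a (Real.cos θ) (Real.sin θ) * ((Sq θ)^3)⁻¹ by field_simp, key2]
    field_simp

/-- A homogeneous polynomial of degree `k ≥ 1` whose derivative along `f₀` is
nonpositive everywhere must be the zero polynomial. -/
theorem stmt18 (k : ℕ) (hk : 1 ≤ k) (p : MvPolynomial (Fin 2) ℝ)
    (hp : p.IsHomogeneous k)
    (hder : ∀ v : ℝ × ℝ,
      fderiv ℝ (fun w : ℝ × ℝ => MvPolynomial.eval ![w.1, w.2] p) v (f0 v) ≤ 0) :
    p = 0 := by
  classical
  set F : ℝ × ℝ → ℝ := fun w => eval ![w.1, w.2] p with hFdef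
  have hFd : Differentiable ℝ F := diffF p
  set g : ℝ → ℝ := fun θ => F (γ θ) with hgdef
  have hgd : ∀ θ, HasDerivAt g
      ((2 - Real.sin (2*θ)^2) * fderiv ℝ F (γ θ) (f0 (γ θ))) θ := by
    intro θ
    have h := ((hFd (γ θ)).hasFDerivAt).comp_hasDerivAt θ (hasDerivAt_γ θ)
    simp at h; exact h
  have hg' : ∀ θ, deriv g θ ≤ 0 := by
    intro θ
    rw [(hgd θ).deriv]
    exact mul_nonpos_of_nonneg_of_nonpos (w_pos θ).le (hder (γ θ))
  have hmono : Antitone g :=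
    antitone_of_deriv_nonpos (fun θ => (hgd θ).differentiableAt) hg'
  have hper : Function.Periodic g (2*Real.pi) := fun θ => by
    simp only [hgdef, γ_periodic θ]
  have hconst : ∀ θ, g θ = g 0 := by
    intro θ
    have h2π : (0:ℝ) < 2*Real.pi := by positivity
    obtain ⟨n, hn⟩ := exists_nat_ge (|θ| / (2*Real.pi))
    have habs : |θ| ≤ n * (2*Real.pi) := by
      rw [div_le_iff₀ h2π] at hn; exact hn
    have h1 : θ ≤ n * (2*Real.pi) := (le_abs_self θ).trans habs
    have h2 : -(n * (2*Real.pi)) ≤ θ := by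
      have := neg_abs_le θ; linarith
    have e1 : g ((n:ℝ) * (2*Real.pi)) = g 0 := hper.nat_mul_eq n
    have e2 : g (-((n:ℝ) * (2*Real.pi))) = g 0 := by
      have := hper.sub_nat_mul_eq (x := 0) n; simpa using this
    exact le_antisymm (e2 ▸ hmono h2) (e1 ▸ hmono h1)
  set cst := g 0 with hcst
  -- value of p at any nonzero point
  have hval : ∀ x y : ℝ, ¬(x = 0 ∧ y = 0) →
      eval ![x, y] p = (‖(⟨x, y⟩ : ℂ)‖ * Sq (Complex.arg ⟨x, y⟩)) ^ k * cst := by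
    intro x y hxy
    set z : ℂ := ⟨x, y⟩ with hz
    have hzne : z ≠ 0 := by
      simp only [hz, ne_eq, Complex.ext_iff, Complex.zero_re, Complex.zero_im]
      tauto
    set θ := Complex.arg z with hθ
    have hcos : ‖z‖ * Real.cos θ = x := Complex.norm_mul_cos_arg z
    have hsin : ‖z‖ * Real.sin θ = y := Complex.norm_mul_sin_arg z
    have hS0 : Sq θ ≠ 0 := (Sq_pos θ).ne'
    have hfun : ![x, y] = fun i => (‖z‖ * Sq θ) *
        ![(Sq θ)⁻¹ * Real.cos θ, (Sq θ)⁻¹ * Real.sin θ] i := by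
      funext i
      fin_cases i
      · simp only [Fin.zero_eta, Matrix.cons_val_zero]
        field_simp
        linear_combination (-1) * hcos
      · simp only [Fin.mk_one, Matrix.cons_val_one, Matrix.head_cons, Matrix.cons_val_zero]
        field_simp
        linear_combination (-1) * hsin
    rw [hfun, eval_smul_hom hp]
    have : eval ![(Sq θ)⁻¹ * Real.cos θ, (Sq θ)⁻¹ * Real.sin θ] p = cst := by
      have := hconst θ
      simpa [hgdef, hFdef, γ] using this
    rw [this]
  -- the polynomial identity
  have hsq : ∀ x y : ℝ, ¬(x = 0 ∧ y = 0) →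
      (‖(⟨x, y⟩ : ℂ)‖ * Sq (Complex.arg ⟨x, y⟩))^2 * (x^2 + y^2) = 2 * (x^4 + y^4) := by
    intro x y hxy
    set z : ℂ := ⟨x, y⟩ with hz
    set θ := Complex.arg z with hθ
    have hcos : ‖z‖ * Real.cos θ = x := Complex.norm_mul_cos_arg z
    have hsin : ‖z‖ * Real.sin θ = y := Complex.norm_mul_sin_arg z
    have hr2 : ‖z‖^2 = x^2 + y^2 := by
      rw [Complex.sq_norm, Complex.normSq_mk]; ring
    rw [mul_pow, Sq_sq θ, Real.sin_two_mul]
    set r := ‖z‖ with hr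
    set s := Real.sin θ with hs
    set c := Real.cos θ with hc
    linear_combination
      (-(2*r^3*c - 2*r^3*c^3 - 4*r^3*s^2*c^3 + 2*x*r^2 - 2*x*r^2*c^2 - 4*x*r^2*s^2*c^2
          - 2*x^2*r*c - 2*x^3)) * hcos
      + (-(2*r^3*s - 2*r^3*s^3 - 4*r^3*s^3*c^2 + 2*y*r^2 - 2*y*r^2*s^2 - 4*y*r^2*s^2*c^2
          - 2*y^2*r*s - 2*y^3)) * hsin
      + (-2*r^4*c^2 - 2*r^4*s^2 - 4*r^4*s^2*c^2) * (Real.sin_sq_add_cos_sq θ)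
  have hpoly : p^2 * (X 0^2 + X 1^2)^k = C (cst^2 * 2^k) * (X 0^4 + X 1^4)^k := by
    apply MvPolynomial.funext
    intro v
    have hv : v = ![v 0, v 1] := by funext i; fin_cases i <;> rfl
    simp only [eval_mul, eval_pow, eval_C, map_add, eval_X]
    by_cases h0 : v 0 = 0 ∧ v 1 = 0
    · rw [h0.1, h0.2]
      have : (0:ℝ)^2 + 0^2 = 0 := by norm_num
      rw [this, zero_pow (by omega : k ≠ 0)]
      have : (0:ℝ)^4 + 0^4 = 0 := by norm_num
      rw [this, zero_pow (by omega : k ≠ 0)]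
      ring
    · rw [hv] at h0 ⊢
      simp only [Matrix.cons_val_zero, Matrix.cons_val_one, Matrix.head_cons] at h0 ⊢
      have h0' : ¬(v 0 = 0 ∧ v 1 = 0) := h0
      rw [hval (v 0) (v 1) h0']
      have hs := hsq (v 0) (v 1) h0'
      rw [show ((‖(⟨v 0, v 1⟩ : ℂ)‖ * Sq (Complex.arg ⟨v 0, v 1⟩)) ^ k * cst)^2
            * ((v 0)^2 + (v 1)^2)^k
          = cst^2 * (((‖(⟨v 0, v 1⟩ : ℂ)‖ * Sq (Complex.arg ⟨v 0, v 1⟩)))^2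
              * ((v 0)^2 + (v 1)^2))^k by
        rw [mul_pow ((‖(⟨v 0, v 1⟩ : ℂ)‖ * Sq (Complex.arg ⟨v 0, v 1⟩))^2) _ k,
          ← pow_mul, mul_comm 2 k]
        ring]
      rw [hs, mul_pow]
      ring
  -- evaluate over ℂ at (I, 1) to get cst = 0
  have hcst0 : cst = 0 := by
    have := congrArg (aeval ![Complex.I, 1] : MvPolynomial (Fin 2) ℝ →ₐ[ℝ] ℂ) hpoly
    simp only [map_mul, map_pow, map_add, aeval_X, aeval_C, Matrix.cons_val_zero,
      Matrix.cons_val_one, Matrix.head_cons] at this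
    rw [show (Complex.I^2 + 1^2 : ℂ) = 0 by simp [Complex.I_sq], zero_pow (by omega : k ≠ 0),
      mul_zero] at this
    rw [show (Complex.I^4 + 1^4 : ℂ) = 2 by
        rw [show (4:ℕ) = 2*2 from rfl, pow_mul, Complex.I_sq]; norm_num] at this
    have h1 : (cst:ℂ)^2 * (2:ℂ)^k * (2:ℂ)^k = 0 := by
      simpa [Complex.coe_algebraMap, Complex.ofReal_ofNat] using this.symm
    have h2 : cst = 0 := by
      have hne : ((2:ℂ)^k) ≠ 0 := pow_ne_zero _ two_ne_zero
      have := mul_eq_zero.mp h1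
      rcases this with h | h
      · rcases mul_eq_zero.mp h with h' | h'
        · have : (cst:ℂ) = 0 := by
            exact pow_eq_zero_iff (by norm_num) |>.mp h'
          exact_mod_cast this
        · exact absurd h' hne
      · exact absurd h hne
    exact h2
  -- conclude p = 0
  apply MvPolynomial.funext
  intro v
  have hv : v = ![v 0, v 1] := by funext i; fin_cases i <;> rfl
  rw [map_zero, hv]
  by_cases h0 : v 0 = 0 ∧ v 1 = 0
  · rw [h0.1, h0.2]
    have : (![(0:ℝ), 0] : Fin 2 → ℝ) = 0 := by funext i; fin_cases i <;> rfl
    rw [this]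
    by_contra hne
    have := hp (by rw [← MvPolynomial.constantCoeff_eq]; simpa [MvPolynomial.eval_zero] using hne : coeff 0 p ≠ 0)
    simp at this
    omega
  · rw [hval (v 0) (v 1) h0, hcst0, mul_zero]
end
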